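/- arXiv:1806.04840 — 6 statements merged into one kernel-verified Lean document; each statement's English description precedes it below -/
import Mathlib

section
/- Define Q, R: ℚ ∩ (0,1) → ℤ[t, t⁻¹] recursively by Q_{1/2} = 1, R_{1/2} = 0, Q_{1/3} = -t⁻¹, R_{1/3} = -t, Q_{2/3} = -t, R_{2/3} = -t⁻¹, and Q_x = -t·Q_y - t⁻¹·Q_z, R_x = -t·R_y - t⁻¹·R_z whenever (y, z) is the pair of parents of x. Then for every irreducible fraction p/q ∈ (0,1) with 2p < q, Q_{p/q}(-1) = p and Q_{p/q}(-1) + R_{p/q}(-1) = q - p. -/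
open LaurentPolynomial

/-- `QParents y z x` : (y, z) are Farey neighbors a/b, c/d with b*c - a*d = 1
(positive denominators) whose mediant is x. -/
def QParents (y z x : ℚ) : Prop :=
  ∃ p q r s : ℤ, 0 < q ∧ 0 < s ∧ q * r - p * s = 1 ∧
    y = (p : ℚ) / q ∧ z = (r : ℚ) / s ∧ x = ((p : ℚ) + r) / ((q : ℚ) + s)

theorem aux_Q_R (Q R : ℚ → LaurentPolynomial ℤ)
    (hQ0 : Q 0 = 0) (hR0 : R 0 = 1)
    (hQh : Q (1/2) = 1) (hRh : R (1/2) = 0)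
    (hQrec : ∀ x y z : ℚ, QParents y z x → x ≠ 1/2 →
      Q x = -T 1 * Q y - T (-1) * Q z)
    (hRrec : ∀ x y z : ℚ, QParents y z x → x ≠ 1/2 →
      R x = -T 1 * R y - T (-1) * R z)
    (ev : LaurentPolynomial ℤ →+* ℤ) (hev : ev (T 1) = -1) :
    ∀ b a : ℕ, Nat.Coprime a b → 0 < b → 2 * a ≤ b →
      ev (Q ((a : ℚ) / b)) = a ∧
        ev (Q ((a : ℚ) / b)) + ev (R ((a : ℚ) / b)) = (b : ℤ) - a := by
  have hevT : ev (T (-1) : LaurentPolynomial ℤ) = -1 := by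
    have h1 : (T (-1) * T 1 : LaurentPolynomial ℤ) = 1 := by
      rw [← T_add]; norm_num
    have h2 := congrArg ev h1
    rw [map_mul, hev, map_one] at h2
    linarith
  intro b
  induction b using Nat.strong_induction_on with
  | _ b IH =>
  intro a hcop hb hab
  rcases Nat.lt_or_ge b 3 with h3 | h3
  · interval_cases b
    · -- b = 1, a = 0
      have ha : a = 0 := by omega
      subst ha
      norm_num [hQ0, hR0]
    · -- b = 2
      have ha : a = 0 ∨ a = 1 := by omega
      rcases ha with ha | ha
      · subst ha; simp [Nat.Coprime] at hcop
      subst ha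
      norm_num [hQh, hRh]
  · -- b ≥ 3
    have ha : 0 < a := by
      rcases Nat.eq_zero_or_pos a with h | h
      · subst h; rw [Nat.coprime_zero_left] at hcop; omega
      · exact h
    have hab' : 2 * a < b := by
      rcases eq_or_lt_of_le hab with h | h
      · exfalso
        have hdvd : a ∣ b := ⟨2, by omega⟩
        have h1 : a ∣ Nat.gcd a b := Nat.dvd_gcd dvd_rfl hdvd
        rw [hcop] at h1
        have := Nat.dvd_one.mp h1
        omega
      · exact h
    -- Bezout
    have hgcd : Int.gcd (a : ℤ) (b : ℤ) = 1 := by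
      rw [Int.gcd_natCast_natCast]; exact hcop
    obtain ⟨u, v, huv⟩ := Int.isCoprime_iff_gcd_eq_one.mpr hgcd
    set d : ℤ := (-u) % (b : ℤ) with hd_def
    set c : ℤ := v - (a : ℤ) * ((-u) / (b : ℤ)) with hc_def
    have hmod := Int.mul_ediv_add_emod (-u) (b : ℤ)
    have hcd : (b : ℤ) * c - (a : ℤ) * d = 1 := by
      rw [hc_def, hd_def]
      linear_combination huv - (a : ℤ) * hmod
    have hbpos : (0 : ℤ) < (b : ℤ) := by exact_mod_cast hb
    have hd0 : 0 ≤ d := Int.emod_nonneg _ (by omega)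
    have hdb : d < (b : ℤ) := Int.emod_lt_of_pos _ hbpos
    have hdpos : 0 < d := by
      rcases eq_or_lt_of_le hd0 with h | h
      · exfalso
        have hbc : (b : ℤ) * c = 1 := by rw [← h] at hcd; linarith
        have : (b : ℤ) = 1 := Int.eq_one_of_mul_eq_one_right (by omega) hbc
        omega
      · exact h
    have hapos : (0 : ℤ) < (a : ℤ) := by exact_mod_cast ha
    have hab2 : 2 * (a : ℤ) < (b : ℤ) := by exact_mod_cast hab'
    have hb3 : (3 : ℤ) ≤ (b : ℤ) := by exact_mod_cast h3
    have hc1 : 1 ≤ c := by nlinarith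
    have h2cd : 2 * c ≤ d := by
      have key : (b : ℤ) * (2 * c - d) + d * ((b : ℤ) - 2 * a) = 2 := by
        linear_combination 2 * hcd
      by_contra h
      push_neg at h
      nlinarith [mul_nonneg (by omega : (0:ℤ) ≤ (b:ℤ)) (by omega : (0:ℤ) ≤ 2*c - d - 1),
        mul_nonneg (by omega : (0:ℤ) ≤ d) (by omega : (0:ℤ) ≤ (b:ℤ) - 2*a)]
    have hca : c ≤ (a : ℤ) := by
      by_contra h
      push_neg at h
      nlinarith [mul_nonneg (by omega : (0:ℤ) ≤ (b:ℤ)) (by omega : (0:ℤ) ≤ c - a - 1),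
        mul_nonneg (by omega : (0:ℤ) ≤ (a:ℤ)) (by omega : (0:ℤ) ≤ (b:ℤ) - 1 - d)]
    have h2y : 2 * ((a : ℤ) - c) < (b : ℤ) - d := by
      nlinarith [mul_nonneg (by omega : (0:ℤ) ≤ (b:ℤ) - 2*a - 1) (by omega : (0:ℤ) ≤ (b:ℤ) - d)]
    -- natural number versions
    set a2 := ((a : ℤ) - c).natAbs with ha2_def
    set b2 := ((b : ℤ) - d).natAbs with hb2_def
    set c2 := c.natAbs with hc2_def
    set d2 := d.natAbs with hd2_def
    have hA : (a2 : ℤ) = (a : ℤ) - c := Int.natAbs_of_nonneg (by omega)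
    have hB : (b2 : ℤ) = (b : ℤ) - d := Int.natAbs_of_nonneg (by omega)
    have hC : (c2 : ℤ) = c := Int.natAbs_of_nonneg (by omega)
    have hD : (d2 : ℤ) = d := Int.natAbs_of_nonneg (by omega)
    have hcop_z : Nat.Coprime c2 d2 := by
      have : IsCoprime c d := ⟨(b : ℤ), -(a : ℤ), by linear_combination hcd⟩
      exact Int.isCoprime_iff_gcd_eq_one.mp this
    have hcop_y : Nat.Coprime a2 b2 := by
      have : IsCoprime ((a : ℤ) - c) ((b : ℤ) - d) := ⟨-d, c, by linear_combination hcd⟩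
      exact Int.isCoprime_iff_gcd_eq_one.mp this
    have hy := IH b2 (by omega) a2 hcop_y (by omega) (by omega)
    have hz := IH d2 (by omega) c2 hcop_z (by omega) (by omega)
    have hQA : ((a2 : ℚ)) = (((a : ℤ) - c : ℤ) : ℚ) := by exact_mod_cast hA
    have hQB : ((b2 : ℚ)) = (((b : ℤ) - d : ℤ) : ℚ) := by exact_mod_cast hB
    have hQC : ((c2 : ℚ)) = ((c : ℤ) : ℚ) := by exact_mod_cast hC
    have hQD : ((d2 : ℚ)) = ((d : ℤ) : ℚ) := by exact_mod_cast hD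
    have hpar : QParents ((a2 : ℚ) / b2) ((c2 : ℚ) / d2) ((a : ℚ) / b) := by
      refine ⟨(a : ℤ) - c, (b : ℤ) - d, c, d, by omega, hdpos,
        by linear_combination hcd, ?_, ?_, ?_⟩
      · rw [hQA, hQB]
      · rw [hQC, hQD]
      · push_cast
        rw [show ((a : ℚ) - c + c) = (a : ℚ) by ring, show ((b : ℚ) - d + d) = (b : ℚ) by ring]
    have hne : ((a : ℚ) / b) ≠ 1 / 2 := by
      intro h
      rw [div_eq_div_iff (by positivity) (by norm_num)] at h
      have h2 : ((2 * a : ℕ) : ℚ) = ((b : ℕ) : ℚ) := by push_cast; linarith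
      have h4 : 2 * a = b := Nat.cast_injective h2
      omega
    have hqe := hQrec _ _ _ hpar hne
    have hre := hRrec _ _ _ hpar hne
    have eQ : ev (Q ((a : ℚ) / b)) = ev (Q ((a2 : ℚ) / b2)) + ev (Q ((c2 : ℚ) / d2)) := by
      rw [hqe, map_sub, map_mul, map_mul, map_neg, hev, hevT]; ring
    have eR : ev (R ((a : ℚ) / b)) = ev (R ((a2 : ℚ) / b2)) + ev (R ((c2 : ℚ) / d2)) := by
      rw [hre, map_sub, map_mul, map_mul, map_neg, hev, hevT]; ring
    constructor
    · rw [eQ, hy.1, hz.1]; omega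
    · rw [eQ, eR]
      have h1 := hy.1
      have h2 := hy.2
      have h3 := hz.1
      have h4 := hz.2
      omega

/-- Let Q, R : ℚ → ℤ[t,t⁻¹] satisfy the base cases Q₀ = Q₁ = 0, R₀ = R₁ = 1,
Q_{1/2} = 1, R_{1/2} = 0, Q_{1/3} = -t⁻¹, R_{1/3} = -t, Q_{2/3} = -t, R_{2/3} = -t⁻¹
and the recursion Q_x = -t·Q_y - t⁻¹·Q_z, R_x = -t·R_y - t⁻¹·R_z whenever (y,z) is
the pair of parents of x (other than 1/2). Then for every irreducible fraction
p/q ∈ (0,1) with 2p < q, evaluating at t = -1 gives Q_{p/q}(-1) = p and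
Q_{p/q}(-1) + R_{p/q}(-1) = q - p. (Here `T 1` plays the role of t.) -/
theorem eval_Q_R_at_neg_one (Q R : ℚ → LaurentPolynomial ℤ)
    (hQ0 : Q 0 = 0) (hR0 : R 0 = 1) (hQ1 : Q 1 = 0) (hR1 : R 1 = 1)
    (hQh : Q (1/2) = 1) (hRh : R (1/2) = 0)
    (hQ3 : Q (1/3) = -T (-1)) (hR3 : R (1/3) = -T 1)
    (hQ23 : Q (2/3) = -T 1) (hR23 : R (2/3) = -T (-1))
    (hQrec : ∀ x y z : ℚ, QParents y z x → x ≠ 1/2 →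
      Q x = -T 1 * Q y - T (-1) * Q z)
    (hRrec : ∀ x y z : ℚ, QParents y z x → x ≠ 1/2 →
      R x = -T 1 * R y - T (-1) * R z)
    (p q : ℕ) (hcop : Nat.Coprime p q) (hp : 0 < p) (hq : 2 * p < q)
    (ev : LaurentPolynomial ℤ →+* ℤ) (hev : ev (T 1) = -1) :
    ev (Q ((p : ℚ) / q)) = p ∧
      ev (Q ((p : ℚ) / q)) + ev (R ((p : ℚ) / q)) = (q : ℤ) - p := by
  exact aux_Q_R Q R hQ0 hR0 hQh hRh hQrec hRrec ev hev q p hcop (by omega) (by omega)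
end

section
/- Let r denote word reversal and i the L↔R swap on LR words. Let α = x/y ∈ ℚ ∩ (0,1) be irreducible with pair of parents (p/q, r/s) (so qr - ps = 1 and x = p+r, y = q+s). If w = w(x/y) is the LR word of α, then r(w) = w(q/y) and (i∘r)(w) = w(s/y). -/
/-- The two-letter alphabet of LR words. -/
inductive LR
  | L : LR
  | R : LR
  deriving DecidableEq

/-- The operation `i` on LR words: swap every L with R. -/
def iop : List LR → List LR :=
  List.map fun x => match x with | LR.L => LR.R | LR.R => LR.L

/-- `FareyPair y z x` : (y, z) are Farey neighbors p/q, r/s with q*r - p*s = 1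
(positive denominators) whose mediant is x. -/
def FareyPair (y z x : ℚ) : Prop :=
  ∃ p q r s : ℤ, 0 < q ∧ 0 < s ∧ q * r - p * s = 1 ∧
    y = (p : ℚ) / q ∧ z = (r : ℚ) / s ∧ x = ((p : ℚ) + r) / ((q : ℚ) + s)

/-- The Stern–Brocot LR-word relation: `SB α w` says that w is the LR word `w(α)`
of the rational α ∈ (0,1), for the tree rooted at 1/2.  The word of 1/2 is empty,
and for a mediant x of Farey-neighbor parents (y, z) with words w₁, w₂, the word
of x is L·w₂ if ℓ(w₁) < ℓ(w₂) and R·w₁ if ℓ(w₁) > ℓ(w₂); if the parent y (resp. z)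
is the endpoint 0/1 (resp. 1/1), the word of x is L·w₂ (resp. R·w₁). -/
inductive SB : ℚ → List LR → Prop
  | half : SB (1/2) []
  | left (y z x : ℚ) (w₁ w₂ : List LR) : FareyPair y z x → SB y w₁ → SB z w₂ →
      w₁.length < w₂.length → SB x (LR.L :: w₂)
  | right (y z x : ℚ) (w₁ w₂ : List LR) : FareyPair y z x → SB y w₁ → SB z w₂ →
      w₂.length < w₁.length → SB x (LR.R :: w₁)
  | lbase (z x : ℚ) (w₂ : List LR) : FareyPair 0 z x → SB z w₂ → SB x (LR.L :: w₂)
  | rbase (y x : ℚ) (w₁ : List LR) : FareyPair y 1 x → SB y w₁ → SB x (LR.R :: w₁)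

structure M2 where
  a : ℤ
  b : ℤ
  c : ℤ
  d : ℤ

def M2.mul (x y : M2) : M2 :=
  ⟨x.a*y.a + x.b*y.c, x.a*y.b + x.b*y.d, x.c*y.a + x.d*y.c, x.c*y.b + x.d*y.d⟩

def mat : LR → M2
  | LR.L => ⟨1,1,0,1⟩
  | LR.R => ⟨1,0,1,1⟩

def Mw : List LR → M2
  | [] => ⟨1,0,0,1⟩
  | x :: w => (Mw w).mul (mat x)

def xval (w : List LR) : ℚ :=
  (((Mw w).c + (Mw w).d : ℤ) : ℚ) / (((Mw w).a + (Mw w).b + (Mw w).c + (Mw w).d : ℤ) : ℚ)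

def pval (w : List LR) : ℚ :=
  (((Mw w).c : ℤ) : ℚ) / (((Mw w).a + (Mw w).c : ℤ) : ℚ)

def rval (w : List LR) : ℚ :=
  (((Mw w).d : ℤ) : ℚ) / (((Mw w).b + (Mw w).d : ℤ) : ℚ)

lemma Mw_cons_L (w : List LR) :
    Mw (LR.L :: w) = ⟨(Mw w).a, (Mw w).a+(Mw w).b, (Mw w).c, (Mw w).c+(Mw w).d⟩ := by
  show (Mw w).mul (mat LR.L) = _
  simp [M2.mul, mat]

lemma Mw_cons_R (w : List LR) :
    Mw (LR.R :: w) = ⟨(Mw w).a+(Mw w).b, (Mw w).b, (Mw w).c+(Mw w).d, (Mw w).d⟩ := by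
  show (Mw w).mul (mat LR.R) = _
  simp [M2.mul, mat]

def M2.Inv (x : M2) : Prop :=
  1 ≤ x.a ∧ 0 ≤ x.b ∧ 0 ≤ x.c ∧ 1 ≤ x.d ∧ x.a*x.d - x.b*x.c = 1

lemma inv_Mw (w : List LR) : (Mw w).Inv := by
  induction w with
  | nil => exact ⟨le_refl 1, le_refl 0, le_refl 0, le_refl 1, by norm_num [Mw]⟩
  | cons x w ih =>
    obtain ⟨ha, hb, hc, hd, hdet⟩ := ih
    cases x
    · rw [Mw_cons_L]
      exact ⟨ha, by dsimp; omega, hc, by dsimp; omega, by dsimp; linear_combination hdet⟩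
    · rw [Mw_cons_R]
      exact ⟨by dsimp; omega, hb, by dsimp; omega, hd, by dsimp; linear_combination hdet⟩
lemma coprime_frac_eq {a b a' b' : ℤ} (hb : 0 < b) (hb' : 0 < b')
    (hco : IsCoprime a b) (hco' : IsCoprime a' b')
    (h : (a : ℚ)/(b : ℚ) = (a' : ℚ)/(b' : ℚ)) : a = a' ∧ b = b' := by
  have hb0 : (b : ℚ) ≠ 0 := by exact_mod_cast hb.ne'
  have hb0' : (b' : ℚ) ≠ 0 := by exact_mod_cast hb'.ne'
  rw [div_eq_div_iff hb0 hb0'] at h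
  have key : a * b' = a' * b := by exact_mod_cast h
  have h1 : b ∣ b' := by
    have : b ∣ a * b' := key ▸ Dvd.intro_left a' rfl
    exact (hco.symm).dvd_of_dvd_mul_left this
  have h2 : b' ∣ b := by
    have : b' ∣ a' * b := key ▸ Dvd.intro_left a rfl
    exact (hco'.symm).dvd_of_dvd_mul_left this
  have hbb : b = b' := Int.dvd_antisymm hb.le hb'.le h1 h2
  subst hbb
  refine ⟨?_, rfl⟩
  have hbz : b ≠ 0 := by omega
  exact mul_right_cancel₀ hbz key

lemma farey_quad_unique (p q r s p' q' r' s' : ℤ) (hq : 0 < q) (hs : 0 < s)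
    (hq' : 0 < q') (hs' : 0 < s') (hd : q*r - p*s = 1) (hd' : q'*r' - p'*s' = 1)
    (hval : ((p + r : ℤ) : ℚ)/((q + s : ℤ) : ℚ) = ((p' + r' : ℤ) : ℚ)/((q' + s' : ℤ) : ℚ)) :
    p = p' ∧ q = q' ∧ r = r' ∧ s = s' := by
  have hco : IsCoprime (p + r) (q + s) := ⟨q, -p, by linear_combination hd⟩
  have hco' : IsCoprime (p' + r') (q' + s') := ⟨q', -p', by linear_combination hd'⟩
  obtain ⟨ha, hb⟩ := coprime_frac_eq (by omega) (by omega) hco hco' hval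
  -- now q + s = q' + s', p + r = p' + r'
  have e1 : (q+s) * r - (p+r) * s = 1 := by linear_combination hd
  have e2 : (q+s) * r' - (p+r) * s' = 1 := by rw [ha, hb]; linear_combination hd'
  have e3 : (q+s) * (r - r') = (p+r) * (s - s') := by ring_nf; linear_combination e1 - e2
  have hdvd : (q+s) ∣ (s - s') := by
    have : (q+s) ∣ (p+r) * (s - s') := e3 ▸ Dvd.intro _ rfl
    exact (hco.symm).dvd_of_dvd_mul_left this
  obtain ⟨k, hk⟩ := hdvd
  have hk1 : k < 1 := by
    by_contra hcon
    push_neg at hcon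
    have h5 : (q+s) * 1 ≤ (q+s) * k := mul_le_mul_of_nonneg_left hcon (by omega)
    have h6 : (q+s) * 1 = q + s := by ring
    omega
  have hk2 : -1 < k := by
    by_contra hcon
    push_neg at hcon
    have h5 : (q+s) * k ≤ (q+s) * (-1) := mul_le_mul_of_nonneg_left hcon (by omega)
    have h6 : (q+s) * (-1) = -(q+s) := by ring
    omega
  have hk0 : k = 0 := by omega
  have hss : s = s' := by rw [hk0, mul_zero] at hk; omega
  have hrr : r = r' := by
    have : (q+s) * (r - r') = 0 := by rw [e3, hss]; ring
    have := mul_eq_zero.1 this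
    omega
  exact ⟨by omega, by omega, hrr, hss⟩
lemma pval_cons_L (w : List LR) : pval (LR.L :: w) = pval w := by
  rw [pval, pval, Mw_cons_L]

lemma rval_cons_R (w : List LR) : rval (LR.R :: w) = rval w := by
  rw [rval, rval, Mw_cons_R]

lemma rval_cons_L (w : List LR) : rval (LR.L :: w) = xval w := by
  rw [rval, Mw_cons_L, xval]; dsimp; push_cast; ring_nf

lemma pval_cons_R (w : List LR) : pval (LR.R :: w) = xval w := by
  rw [pval, Mw_cons_R, xval]; dsimp; push_cast; ring_nf

lemma fp_L (w : List LR) : FareyPair (pval w) (xval w) (xval (LR.L :: w)) := by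
  obtain ⟨ha, hb, hc, hd, hdet⟩ := inv_Mw w
  refine ⟨(Mw w).c, (Mw w).a + (Mw w).c, (Mw w).c + (Mw w).d,
    (Mw w).a + (Mw w).b + (Mw w).c + (Mw w).d, by omega, by omega,
    by linear_combination hdet, ?_, ?_, ?_⟩
  · rw [pval]
  · rw [xval]
  · rw [xval, Mw_cons_L]; dsimp; push_cast; ring

lemma fp_R (w : List LR) : FareyPair (xval w) (rval w) (xval (LR.R :: w)) := by
  obtain ⟨ha, hb, hc, hd, hdet⟩ := inv_Mw w
  refine ⟨(Mw w).c + (Mw w).d, (Mw w).a + (Mw w).b + (Mw w).c + (Mw w).d, (Mw w).d,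
    (Mw w).b + (Mw w).d, by omega, by omega,
    by linear_combination hdet, ?_, ?_, ?_⟩
  · rw [xval]
  · rw [rval]
  · rw [xval, Mw_cons_R]; dsimp; push_cast; ring

lemma sb_main (w : List LR) : SB (xval w) w ∧
    ((Mw w).c = 0 ∨ ∃ w₁, SB (pval w) w₁ ∧ w₁.length < w.length) ∧
    ((Mw w).b = 0 ∨ ∃ w₂, SB (rval w) w₂ ∧ w₂.length < w.length) := by
  induction w with
  | nil =>
    refine ⟨?_, Or.inl rfl, Or.inl rfl⟩
    have h2 : xval [] = 1/2 := by norm_num [xval, Mw]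
    rw [h2]; exact SB.half
  | cons x w ih =>
    obtain ⟨hsb, hleft, hright⟩ := ih
    obtain ⟨ha, hb, hc, hd, hdet⟩ := inv_Mw w
    cases x with
    | L =>
      have fp := fp_L w
      have hmain : SB (xval (LR.L :: w)) (LR.L :: w) := by
        rcases hleft with hc0 | ⟨w₁, hw₁, hl₁⟩
        · have hp0 : pval w = 0 := by rw [pval, hc0]; simp
          rw [hp0] at fp
          exact SB.lbase (xval w) _ w fp hsb
        · exact SB.left (pval w) (xval w) _ w₁ w fp hw₁ hsb hl₁
      refine ⟨hmain, ?_, Or.inr ⟨w, ?_, by simp⟩⟩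
      · rcases hleft with hc0 | ⟨w₁, hw₁, hl₁⟩
        · left; rw [Mw_cons_L]; exact hc0
        · right; exact ⟨w₁, by rwa [pval_cons_L], by simp; omega⟩
      · rwa [rval_cons_L]
    | R =>
      have fp := fp_R w
      have hmain : SB (xval (LR.R :: w)) (LR.R :: w) := by
        rcases hright with hb0 | ⟨w₂, hw₂, hl₂⟩
        · have hr1 : rval w = 1 := by
            rw [rval, hb0, zero_add]
            exact div_self (by exact_mod_cast (by omega : (Mw w).d ≠ 0))
          rw [hr1] at fp
          exact SB.rbase (xval w) _ w fp hsb
        · exact SB.right (xval w) (rval w) _ w w₂ fp hsb hw₂ hl₂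
      refine ⟨hmain, Or.inr ⟨w, ?_, by simp⟩, ?_⟩
      · rwa [pval_cons_R]
      · rcases hright with hb0 | ⟨w₂, hw₂, hl₂⟩
        · left; rw [Mw_cons_R]; exact hb0
        · right; exact ⟨w₂, by rwa [rval_cons_R], by simp; omega⟩
lemma mul_mat_cancel (X Y : M2) (x : LR) (h : X.mul (mat x) = Y.mul (mat x)) : X = Y := by
  cases x <;> (cases X; cases Y; simp [M2.mul, mat, M2.mk.injEq] at h ⊢; omega)

lemma Mw_inj (w : List LR) : ∀ w', Mw w = Mw w' → w = w' := by
  induction w with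
  | nil =>
    intro w' h
    cases w' with
    | nil => rfl
    | cons x t =>
      exfalso
      obtain ⟨ha, hb, hc, hd, hdet⟩ := inv_Mw t
      cases x
      · rw [show Mw ([] : List LR) = ⟨1,0,0,1⟩ from rfl, Mw_cons_L] at h
        simp [M2.mk.injEq] at h
        omega
      · rw [show Mw ([] : List LR) = ⟨1,0,0,1⟩ from rfl, Mw_cons_R] at h
        simp [M2.mk.injEq] at h
        omega
  | cons x t ih =>
    intro w' h
    cases w' with
    | nil =>
      exfalso
      obtain ⟨ha, hb, hc, hd, hdet⟩ := inv_Mw t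
      cases x
      · rw [show Mw ([] : List LR) = ⟨1,0,0,1⟩ from rfl, Mw_cons_L] at h
        simp [M2.mk.injEq] at h
        omega
      · rw [show Mw ([] : List LR) = ⟨1,0,0,1⟩ from rfl, Mw_cons_R] at h
        simp [M2.mk.injEq] at h
        omega
    | cons x' t' =>
      obtain ⟨ha, hb, hc, hd, hdet⟩ := inv_Mw t
      obtain ⟨ha', hb', hc', hd', hdet'⟩ := inv_Mw t'
      cases x <;> cases x'
      · rw [ih t' (mul_mat_cancel _ _ LR.L h)]
      · exfalso
        rw [Mw_cons_L, Mw_cons_R] at h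
        simp [M2.mk.injEq] at h
        omega
      · exfalso
        rw [Mw_cons_R, Mw_cons_L] at h
        simp [M2.mk.injEq] at h
        omega
      · rw [ih t' (mul_mat_cancel _ _ LR.R h)]
lemma inv_Mw' (w : List LR) (a b c d : ℤ) (h : Mw w = ⟨a,b,c,d⟩) :
    1 ≤ a ∧ 0 ≤ b ∧ 0 ≤ c ∧ 1 ≤ d ∧ a*d - b*c = 1 := by
  have := inv_Mw w; rw [h] at this; exact this

lemma xval_eq (w : List LR) (a b c d : ℤ) (h : Mw w = ⟨a,b,c,d⟩) :
    xval w = ((c + d : ℤ) : ℚ)/((a+b+c+d : ℤ) : ℚ) := by rw [xval, h]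

lemma pval_eq (w : List LR) (a b c d : ℤ) (h : Mw w = ⟨a,b,c,d⟩) :
    pval w = ((c : ℤ) : ℚ)/((a+c : ℤ) : ℚ) := by rw [pval, h]

lemma rval_eq (w : List LR) (a b c d : ℤ) (h : Mw w = ⟨a,b,c,d⟩) :
    rval w = ((d : ℤ) : ℚ)/((b+d : ℤ) : ℚ) := by rw [rval, h]

lemma xval_pos (w : List LR) : 0 < xval w := by
  rcases hM : Mw w with ⟨a,b,c,d⟩
  obtain ⟨ha,hb,hc,hd,hdet⟩ := inv_Mw' w a b c d hM
  rw [xval_eq w a b c d hM]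
  apply div_pos
  · exact_mod_cast (by omega : (0:ℤ) < c + d)
  · exact_mod_cast (by omega : (0:ℤ) < a+b+c+d)

lemma xval_lt_one (w : List LR) : xval w < 1 := by
  rcases hM : Mw w with ⟨a,b,c,d⟩
  obtain ⟨ha,hb,hc,hd,hdet⟩ := inv_Mw' w a b c d hM
  rw [xval_eq w a b c d hM, div_lt_one (by exact_mod_cast (by omega : (0:ℤ) < a+b+c+d))]
  exact_mod_cast (by omega : (c+d : ℤ) < a+b+c+d)

lemma xval_inj (w w' : List LR) (h : xval w = xval w') : w = w' := by
  rcases hM : Mw w with ⟨a,b,c,d⟩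
  rcases hM' : Mw w' with ⟨a',b',c',d'⟩
  obtain ⟨ha,hb,hc,hd,hdet⟩ := inv_Mw' w a b c d hM
  obtain ⟨ha',hb',hc',hd',hdet'⟩ := inv_Mw' w' a' b' c' d' hM'
  have hval : ((c + d : ℤ) : ℚ)/(((a+c) + (b+d) : ℤ) : ℚ)
      = ((c' + d' : ℤ) : ℚ)/(((a'+c') + (b'+d') : ℤ) : ℚ) := by
    rw [xval_eq w a b c d hM, xval_eq w' a' b' c' d' hM'] at h
    convert h using 2 <;> push_cast <;> ring
  obtain ⟨e1, e2, e3, e4⟩ := farey_quad_unique c (a+c) d (b+d) c' (a'+c') d' (b'+d')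
    (by omega) (by omega) (by omega) (by omega)
    (by linear_combination hdet) (by linear_combination hdet') hval
  exact Mw_inj w w' (by rw [hM, hM']; simp only [M2.mk.injEq]; omega)

lemma ident (w : List LR) (a b c d p q : ℤ) (hM : Mw w = ⟨a,b,c,d⟩) (hq : 0 < q)
    (hco : IsCoprime p q) (h : (p:ℚ)/(q:ℚ) = xval w) : p = c + d ∧ q = a+b+c+d := by
  obtain ⟨ha,hb,hc,hd,hdet⟩ := inv_Mw' w a b c d hM
  refine coprime_frac_eq hq (by omega) hco ⟨a+c, -c, by linear_combination hdet⟩ ?_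
  rw [h, xval_eq w a b c d hM]
lemma sound : ∀ n : ℕ, ∀ w : List LR, ∀ x : ℚ, w.length ≤ n → SB x w → x = xval w := by
  intro n
  induction n with
  | zero =>
    intro w x hlen hw
    have hw0 : w = [] := by cases w with | nil => rfl | cons y t => simp at hlen
    subst hw0
    cases hw
    norm_num [xval, Mw]
  | succ n ih =>
    intro w x hlen hw
    cases hw with
    | half => norm_num [xval, Mw]
    | left y z xx w₁ w₂ fp h1 h2 hl =>
      obtain ⟨p, q, r, s, hq, hs, hd, hy, hz, hx⟩ := fp
      have hl2 : w₂.length ≤ n := by simp at hlen; omega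
      have hl1 : w₁.length ≤ n := by omega
      have e1 : y = xval w₁ := ih w₁ y hl1 h1
      have e2 : z = xval w₂ := ih w₂ z hl2 h2
      rcases hM1 : Mw w₁ with ⟨a1,b1,c1,d1⟩
      rcases hM2 : Mw w₂ with ⟨a2,b2,c2,d2⟩
      obtain ⟨ha1,hb1,hc1,hd1,hdet1⟩ := inv_Mw' w₁ a1 b1 c1 d1 hM1
      obtain ⟨ha2,hb2,hc2,hd2,hdet2⟩ := inv_Mw' w₂ a2 b2 c2 d2 hM2
      rw [hy] at e1
      rw [hz] at e2
      obtain ⟨hp, hqe⟩ := ident w₁ a1 b1 c1 d1 p q hM1 hq ⟨-s, r, by linear_combination hd⟩ e1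
      obtain ⟨hr, hse⟩ := ident w₂ a2 b2 c2 d2 r s hM2 hs ⟨q, -p, by linear_combination hd⟩ e2
      have key2 : (a2+c2) * r - c2 * s = 1 := by rw [hr, hse]; linear_combination hdet2
      have hds : s ∣ (q - (a2+c2)) := by
        have h6 : s ∣ (q - (a2+c2)) * r := ⟨p - c2, by linear_combination hd - key2⟩
        have hco : IsCoprime s r := ⟨-p, q, by linear_combination hd⟩
        exact hco.dvd_of_dvd_mul_right h6
      obtain ⟨k, hk⟩ := hds
      by_cases hk0 : k = 0
      · rw [hk0, mul_zero] at hk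
        have hq0 : q = a2+c2 := by omega
        have hp0 : p = c2 := by
          have h7 : s * (p - c2) = 0 := by rw [hq0] at hd; linear_combination key2 - hd
          rcases mul_eq_zero.1 h7 with h8 | h8 <;> omega
        rw [hx, xval_eq (LR.L :: w₂) a2 (a2+b2) c2 (c2+d2) (by rw [Mw_cons_L, hM2]),
          hp0, hq0, hr, hse]
        push_cast
        ring
      · exfalso
        have hkpos : 1 ≤ k := by
          rcases (by omega : 1 ≤ k ∨ k ≤ -1) with h' | h'
          · exact h'
          · exfalso
            have h5 : s * k ≤ s * (-1) := mul_le_mul_of_nonneg_left (by omega) (by omega)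
            have h6 : s * (-1) = -s := by ring
            omega
        have hsq : s < q := by
          have h5 : s * 1 ≤ s * k := mul_le_mul_of_nonneg_left hkpos (by omega)
          have h6 : s * 1 = s := by ring
          omega
        -- z must be the tree right-parent of w₁
        have key1 : q * d1 - (c1+d1) * (b1+d1) = 1 := by rw [hqe]; linear_combination hdet1
        have hds2 : q ∣ (s - (b1+d1)) := by
          have h6 : q ∣ (s - (b1+d1)) * p := ⟨r - d1, by linear_combination key1 - hd - (b1+d1) * hp⟩
        
          have hco : IsCoprime q p := ⟨r, -s, by linear_combination hd⟩
          exact hco.dvd_of_dvd_mul_right h6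
        obtain ⟨k2, hk2⟩ := hds2
        have hk20 : k2 = 0 := by
          rcases (by omega : k2 = 0 ∨ 1 ≤ k2 ∨ k2 ≤ -1) with h' | h' | h'
          · exact h'
          · exfalso
            have h5 : q * 1 ≤ q * k2 := mul_le_mul_of_nonneg_left h' (by omega)
            have h6 : q * 1 = q := by ring
            omega
          · exfalso
            have h5 : q * k2 ≤ q * (-1) := mul_le_mul_of_nonneg_left (by omega) (by omega)
            have h6 : q * (-1) = -q := by ring
            omega
        rw [hk20, mul_zero] at hk2
        have hss : s = b1 + d1 := by omega
        have hrr : r = d1 := by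
          have h7 : q * (r - d1) = 0 := by rw [hp] at hd; rw [hss] at hd; linear_combination hd - key1
          rcases mul_eq_zero.1 h7 with h8 | h8 <;> omega
        obtain ⟨_, _, hrt⟩ := sb_main w₁
        rcases hrt with hb10 | ⟨w₂', hw₂', hl₂'⟩
        · rw [hM1] at hb10
          simp only at hb10
          -- b1 = 0, so z = d1/d1 = 1, contradicting z = xval w₂ < 1
          have hz1 : z = 1 := by
            rw [hz, hrr, hss, hb10, zero_add]
            exact div_self (by exact_mod_cast (by omega : d1 ≠ 0))
          have hzlt : z < 1 := by
            rw [ih w₂ z hl2 h2]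
            exact xval_lt_one w₂
          rw [hz1] at hzlt
          exact lt_irrefl 1 hzlt
        · have e3 : rval w₁ = xval w₂' := ih w₂' _ (by omega) hw₂'
          have e4 : z = rval w₁ := by
            rw [hz, hrr, hss, rval_eq w₁ a1 b1 c1 d1 hM1]
          have e5 : xval w₂ = xval w₂' := by
            rw [← ih w₂ z hl2 h2, e4, e3]
          have := xval_inj w₂ w₂' e5
          subst this
          omega
    | right y z xx w₁ w₂ fp h1 h2 hl =>
      obtain ⟨p, q, r, s, hq, hs, hd, hy, hz, hx⟩ := fp
      have hl1 : w₁.length ≤ n := by simp at hlen; omega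
      have hl2 : w₂.length ≤ n := by omega
      have e1 : y = xval w₁ := ih w₁ y hl1 h1
      have e2 : z = xval w₂ := ih w₂ z hl2 h2
      rcases hM1 : Mw w₁ with ⟨a1,b1,c1,d1⟩
      rcases hM2 : Mw w₂ with ⟨a2,b2,c2,d2⟩
      obtain ⟨ha1,hb1,hc1,hd1,hdet1⟩ := inv_Mw' w₁ a1 b1 c1 d1 hM1
      obtain ⟨ha2,hb2,hc2,hd2,hdet2⟩ := inv_Mw' w₂ a2 b2 c2 d2 hM2
      rw [hy] at e1
      rw [hz] at e2
      obtain ⟨hp, hqe⟩ := ident w₁ a1 b1 c1 d1 p q hM1 hq ⟨-s, r, by linear_combination hd⟩ e1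
      obtain ⟨hr, hse⟩ := ident w₂ a2 b2 c2 d2 r s hM2 hs ⟨q, -p, by linear_combination hd⟩ e2
      have key1 : q * d1 - (c1+d1) * (b1+d1) = 1 := by rw [hqe]; linear_combination hdet1
      have hds2 : q ∣ (s - (b1+d1)) := by
        have h6 : q ∣ (s - (b1+d1)) * p := ⟨r - d1, by linear_combination key1 - hd - (b1+d1) * hp⟩
        have hco : IsCoprime q p := ⟨r, -s, by linear_combination hd⟩
        exact hco.dvd_of_dvd_mul_right h6
      obtain ⟨k, hk⟩ := hds2
      by_cases hk0 : k = 0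
      · rw [hk0, mul_zero] at hk
        have hs0 : s = b1+d1 := by omega
        have hrr : r = d1 := by
          have h7 : q * (r - d1) = 0 := by rw [hp] at hd; rw [hs0] at hd; linear_combination hd - key1
          rcases mul_eq_zero.1 h7 with h8 | h8 <;> omega
        rw [hx, xval_eq (LR.R :: w₁) (a1+b1) b1 (c1+d1) d1 (by rw [Mw_cons_R, hM1]),
          hp, hqe, hrr, hs0]
        push_cast
        ring
      · exfalso
        have hkpos : 1 ≤ k := by
          rcases (by omega : 1 ≤ k ∨ k ≤ -1) with h' | h'
          · exact h'
          · exfalso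
            have h5 : q * k ≤ q * (-1) := mul_le_mul_of_nonneg_left (by omega) (by omega)
            have h6 : q * (-1) = -q := by ring
            omega
        have hsq : q < s := by
          have h5 : q * 1 ≤ q * k := mul_le_mul_of_nonneg_left hkpos (by omega)
          have h6 : q * 1 = q := by ring
          omega
        -- y must be the tree left-parent of w₂
        have key2 : (a2+c2) * r - c2 * s = 1 := by rw [hr, hse]; linear_combination hdet2
        have hds : s ∣ (q - (a2+c2)) := by
          have h6 : s ∣ (q - (a2+c2)) * r := ⟨p - c2, by linear_combination hd - key2⟩
          have hco : IsCoprime s r := ⟨-p, q, by linear_combination hd⟩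
          exact hco.dvd_of_dvd_mul_right h6
        obtain ⟨k2, hk2⟩ := hds
        have hk20 : k2 = 0 := by
          rcases (by omega : k2 = 0 ∨ 1 ≤ k2 ∨ k2 ≤ -1) with h' | h' | h'
          · exact h'
          · exfalso
            have h5 : s * 1 ≤ s * k2 := mul_le_mul_of_nonneg_left h' (by omega)
            have h6 : s * 1 = s := by ring
            omega
          · exfalso
            have h5 : s * k2 ≤ s * (-1) := mul_le_mul_of_nonneg_left (by omega) (by omega)
            have h6 : s * (-1) = -s := by ring
            omega
        rw [hk20, mul_zero] at hk2
        have hq0 : q = a2+c2 := by omega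
        have hp0 : p = c2 := by
          have h7 : s * (p - c2) = 0 := by rw [hq0] at hd; linear_combination key2 - hd
          rcases mul_eq_zero.1 h7 with h8 | h8 <;> omega
        obtain ⟨_, hlt, _⟩ := sb_main w₂
        rcases hlt with hc20 | ⟨w₁', hw₁', hl₁'⟩
        · rw [hM2] at hc20
          simp only at hc20
          -- c2 = 0, so y = 0, contradicting y = xval w₁ > 0
          have hy0 : y = 0 := by rw [hy, hp0, hc20]; simp
          have hypos : 0 < y := by
            rw [ih w₁ y hl1 h1]
            exact xval_pos w₁
          rw [hy0] at hypos
          exact lt_irrefl 0 hypos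
        · have e3 : pval w₂ = xval w₁' := ih w₁' _ (by omega) hw₁'
          have e4 : y = pval w₂ := by
            rw [hy, hp0, hq0, pval_eq w₂ a2 b2 c2 d2 hM2]
          have e5 : xval w₁ = xval w₁' := by
            rw [← ih w₁ y hl1 h1, e4, e3]
          have := xval_inj w₁ w₁' e5
          subst this
          omega
    | lbase z xx w₂ fp h2 =>
      obtain ⟨p, q, r, s, hq, hs, hd, hy, hz, hx⟩ := fp
      have hl2 : w₂.length ≤ n := by simp at hlen; omega
      have e2 : z = xval w₂ := ih w₂ z hl2 h2
      rcases hM2 : Mw w₂ with ⟨a2,b2,c2,d2⟩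
      obtain ⟨ha2,hb2,hc2,hd2,hdet2⟩ := inv_Mw' w₂ a2 b2 c2 d2 hM2
      rw [hz] at e2
      have hp : p = 0 := by
        have hq0 : (q:ℚ) ≠ 0 := by exact_mod_cast hq.ne'
        field_simp at hy
        simpa using hy.symm
      have hqr : q = 1 ∧ r = 1 := by
        have hqr1 : q * r = 1 := by linear_combination hd + s * hp
        rcases Int.mul_eq_one_iff_eq_one_or_neg_one.1 hqr1 with ⟨h1', h2'⟩ | ⟨h1', h2'⟩ <;> omega
      obtain ⟨hq1, hr1⟩ := hqr
      obtain ⟨hr, hse⟩ := ident w₂ a2 b2 c2 d2 r s hM2 hs ⟨q, -p, by linear_combination hd⟩ e2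
      have hc20 : c2 = 0 := by omega
      have hd21 : d2 = 1 := by omega
      have ha21 : a2 = 1 := by rw [hc20, hd21] at hdet2; omega
      subst hp hq1 hr1 hse hc20 hd21 ha21
      rw [hx, xval_eq (LR.L :: w₂) 1 (1+b2) 0 (0+1) (by rw [Mw_cons_L, hM2])]
      push_cast
      ring
    | rbase y xx w₁ fp h1 =>
      obtain ⟨p, q, r, s, hq, hs, hd, hy, hz, hx⟩ := fp
      have hl1 : w₁.length ≤ n := by simp at hlen; omega
      have e1 : y = xval w₁ := ih w₁ y hl1 h1
      rcases hM1 : Mw w₁ with ⟨a1,b1,c1,d1⟩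
      obtain ⟨ha1,hb1,hc1,hd1,hdet1⟩ := inv_Mw' w₁ a1 b1 c1 d1 hM1
      rw [hy] at e1
      have hrs : r = s := by
        have hs0 : (s:ℚ) ≠ 0 := by exact_mod_cast hs.ne'
        field_simp at hz
        have h9 : s = r := by exact_mod_cast hz
        omega
      have hsq1 : s = 1 ∧ q - p = 1 := by
        have h5 : s * (q - p) = 1 := by rw [hrs] at hd; linear_combination hd
        rcases Int.mul_eq_one_iff_eq_one_or_neg_one.1 h5 with ⟨h1', h2'⟩ | ⟨h1', h2'⟩ <;> omega
      obtain ⟨hs1, hqp⟩ := hsq1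
      obtain ⟨hp, hqe⟩ := ident w₁ a1 b1 c1 d1 p q hM1 hq ⟨-s, r, by linear_combination hd⟩ e1
      have ha11 : a1 = 1 := by omega
      have hb10 : b1 = 0 := by omega
      have hd11 : d1 = 1 := by rw [ha11, hb10] at hdet1; omega
      subst hrs hs1 hp hqe ha11 hb10 hd11
      rw [hx, xval_eq (LR.R :: w₁) (1+0) 0 (c1+1) 1 (by rw [Mw_cons_R, hM1])]
      push_cast
      ring
lemma M2.mul_assoc' (x y z : M2) : (x.mul y).mul z = x.mul (y.mul z) := by
  cases x; cases y; cases z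
  simp only [M2.mul, M2.mk.injEq]
  exact ⟨by ring, by ring, by ring, by ring⟩

lemma M2.one_mul' (x : M2) : (⟨1,0,0,1⟩ : M2).mul x = x := by
  cases x; simp [M2.mul]

lemma M2.mul_one' (x : M2) : x.mul ⟨1,0,0,1⟩ = x := by
  cases x; simp [M2.mul]

lemma Mw_append (u v : List LR) : Mw (u ++ v) = (Mw v).mul (Mw u) := by
  induction u with
  | nil => rw [List.nil_append, show Mw ([] : List LR) = ⟨1,0,0,1⟩ from rfl, M2.mul_one']
  | cons x u ih =>
    show (Mw (u ++ v)).mul (mat x) = (Mw v).mul ((Mw u).mul (mat x))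
    rw [ih, M2.mul_assoc']

def M2.rop (x : M2) : M2 := ⟨x.d, x.b, x.c, x.a⟩

def M2.iopm (x : M2) : M2 := ⟨x.d, x.c, x.b, x.a⟩

lemma Mw_reverse (w : List LR) : Mw w.reverse = (Mw w).rop := by
  induction w with
  | nil => rfl
  | cons x w ih =>
    rw [List.reverse_cons, Mw_append, ih]
    show (M2.mul ⟨1,0,0,1⟩ (mat x)).mul (Mw w).rop = (Mw (x :: w)).rop
    rw [M2.one_mul']
    show (mat x).mul (Mw w).rop = ((Mw w).mul (mat x)).rop
    cases x <;> (rcases Mw w with ⟨a,b,c,d⟩; simp only [M2.mul, mat, M2.rop, M2.mk.injEq]; exact ⟨by ring, by ring, by ring, by ring⟩)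

lemma Mw_iop (w : List LR) : Mw (iop w) = (Mw w).iopm := by
  induction w with
  | nil => rfl
  | cons x w ih =>
    cases x
    · show (Mw (iop w)).mul (mat LR.R) = ((Mw w).mul (mat LR.L)).iopm
      rw [ih]
      rcases Mw w with ⟨a,b,c,d⟩
      simp only [M2.mul, mat, M2.iopm, M2.mk.injEq]
      exact ⟨by ring, by ring, by ring, by ring⟩
    · show (Mw (iop w)).mul (mat LR.L) = ((Mw w).mul (mat LR.R)).iopm
      rw [ih]
      rcases Mw w with ⟨a,b,c,d⟩
      simp only [M2.mul, mat, M2.iopm, M2.mk.injEq]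
      exact ⟨by ring, by ring, by ring, by ring⟩

/-- Let α = (p+r)/(q+s) ∈ ℚ ∩ (0,1) have the pair of parents (p/q, r/s)
(so q*r - p*s = 1) and LR word w.  Then the reversed word r(w) is the LR word of
q/(q+s), and (i∘r)(w) is the LR word of s/(q+s). -/
theorem SB_reverse_and_ir (p q r s : ℤ) (hq : 0 < q) (hs : 0 < s)
    (h : q * r - p * s = 1) (w : List LR)
    (hw : SB (((p : ℚ) + r) / ((q : ℚ) + s)) w) :
    SB ((q : ℚ) / ((q : ℚ) + s)) w.reverse ∧
      SB ((s : ℚ) / ((q : ℚ) + s)) (iop w.reverse) := by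
  have hx : ((p:ℚ)+r)/((q:ℚ)+s) = xval w := sound w.length w _ le_rfl hw
  rcases hM : Mw w with ⟨A,B,C,D⟩
  obtain ⟨hA,hB,hC,hD,hdet⟩ := inv_Mw' w A B C D hM
  have hval : ((p + r : ℤ):ℚ)/((q + s : ℤ):ℚ) = ((C + D : ℤ):ℚ)/(((A+C) + (B+D) : ℤ):ℚ) := by
    rw [xval_eq w A B C D hM] at hx
    convert hx using 2 <;> push_cast <;> ring
  obtain ⟨h1, h2, h3, h4⟩ := farey_quad_unique p q r s C (A+C) D (B+D) hq hs
    (by omega) (by omega) h (by linear_combination hdet) hval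
  constructor
  · have hsb := (sb_main w.reverse).1
    have he : xval w.reverse = (q:ℚ)/((q:ℚ)+s) := by
      have hMr : Mw w.reverse = ⟨D, B, C, A⟩ := by rw [Mw_reverse, hM]; rfl
      rw [xval_eq w.reverse D B C A hMr, h2, h4]
      push_cast; ring
    rwa [he] at hsb
  · have hsb := (sb_main (iop w.reverse)).1
    have he : xval (iop w.reverse) = (s:ℚ)/((q:ℚ)+s) := by
      have hMr : Mw (iop w.reverse) = ⟨A, C, B, D⟩ := by rw [Mw_iop, Mw_reverse, hM]; rfl
      rw [xval_eq _ A C B D hMr, h2, h4]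
      push_cast; ring
    rwa [he] at hsb
end

section
/- For an LR word w and any rationals: if i(w) corresponds to the continued fraction [0; a₂, …, a_m] (m even), then the word wR corresponds to [0; 1, a₂, …, a_m], the word wL corresponds to [0; 2, a₂-1, a₃, …, a_m], and w itself corresponds to [0; 1, a₂-1, a₃, …, a_m]. -/
/-- Continued fraction evaluation: `cf [a, b, c, …] = a + 1/(b + 1/(c + ⋯))`
(with the ℚ convention 1/0 = 0 at the tail), so that `1 / cf l` is the continued
fraction [0; l]. -/
def cf : List ℕ → ℚ
  | [] => 0
  | a :: l => (a : ℚ) + 1 / cf l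

lemma iop_iop (w : List LR) : iop (iop w) = w := by
  induction w with
  | nil => rfl
  | cons a t ih => cases a <;> simp only [iop, List.map_cons] at ih ⊢ <;> simp_all [iop]

lemma iop_length (w : List LR) : (iop w).length = w.length := by simp [iop]

lemma farey_bounds {y z x : ℚ} (h : FareyPair y z x) : y < x ∧ x < z := by
  obtain ⟨p, q, r, s, hq, hs, hdet, hy, hz, hx⟩ := h
  have hq' : (0:ℚ) < q := by exact_mod_cast hq
  have hs' : (0:ℚ) < s := by exact_mod_cast hs
  have hdet' : (q:ℚ) * r - p * s = 1 := by exact_mod_cast hdet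
  subst hy hz hx
  constructor
  · rw [div_lt_div_iff₀ hq' (by linarith)]; nlinarith
  · rw [div_lt_div_iff₀ (by linarith) hs']; nlinarith

lemma SB_mem {x : ℚ} {w : List LR} (h : SB x w) : 0 < x ∧ x < 1 := by
  induction h with
  | half => norm_num
  | left y z x w₁ w₂ hf hy hz hlen ihy ihz =>
      have hb := farey_bounds hf
      exact ⟨by linarith [ihy.1, hb.1], by linarith [ihz.2, hb.2]⟩
  | right y z x w₁ w₂ hf hy hz hlen ihy ihz =>
      have hb := farey_bounds hf
      exact ⟨by linarith [ihy.1, hb.1], by linarith [ihz.2, hb.2]⟩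
  | lbase z x w₂ hf hz ihz =>
      have hb := farey_bounds hf
      exact ⟨by linarith [hb.1], by linarith [ihz.2, hb.2]⟩
  | rbase y x w₁ hf hy ihy =>
      have hb := farey_bounds hf
      exact ⟨by linarith [ihy.1, hb.1], by linarith [hb.2]⟩

lemma farey_compl {y z x : ℚ} (h : FareyPair y z x) :
    FareyPair (1 - z) (1 - y) (1 - x) := by
  obtain ⟨p, q, r, s, hq, hs, hdet, hy, hz, hx⟩ := h
  have hq' : (q:ℚ) ≠ 0 := by exact_mod_cast hq.ne'
  have hs' : (s:ℚ) ≠ 0 := by exact_mod_cast hs.ne'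
  have hqs : (q:ℚ) + s ≠ 0 := by
    have : (0:ℚ) < q := by exact_mod_cast hq
    have : (0:ℚ) < s := by exact_mod_cast hs
    positivity
  refine ⟨s - r, s, q - p, q, hs, hq, by linarith, ?_, ?_, ?_⟩
  · subst hz; push_cast; field_simp
  · subst hy; push_cast; field_simp
  · subst hx; push_cast; field_simp; ring

lemma SB_compl {x : ℚ} {w : List LR} (h : SB x w) : SB (1 - x) (iop w) := by
  induction h with
  | half =>
      have : (1:ℚ) - 1/2 = 1/2 := by norm_num
      rw [this]; exact SB.half
  | left y z x w₁ w₂ hf hy hz hlen ihy ihz =>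
      have : iop (LR.L :: w₂) = LR.R :: iop w₂ := rfl
      rw [this]
      exact SB.right (1 - z) (1 - y) _ (iop w₂) (iop w₁) (farey_compl hf) ihz ihy
        (by simpa [iop_length] using hlen)
  | right y z x w₁ w₂ hf hy hz hlen ihy ihz =>
      have : iop (LR.R :: w₁) = LR.L :: iop w₁ := rfl
      rw [this]
      exact SB.left (1 - z) (1 - y) _ (iop w₂) (iop w₁) (farey_compl hf) ihz ihy
        (by simpa [iop_length] using hlen)
  | lbase z x w₂ hf hz ihz =>
      have h1 : iop (LR.L :: w₂) = LR.R :: iop w₂ := rfl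
      rw [h1]
      have h2 := farey_compl hf
      rw [show (1:ℚ) - 0 = 1 by norm_num] at h2
      exact SB.rbase (1 - z) _ (iop w₂) h2 ihz
  | rbase y x w₁ hf hy ihy =>
      have h1 : iop (LR.R :: w₁) = LR.L :: iop w₁ := rfl
      rw [h1]
      have h2 := farey_compl hf
      rw [show (1:ℚ) - 1 = 0 by norm_num] at h2
      exact SB.lbase (1 - y) _ (iop w₁) h2 ihy
lemma helperL (a b : ℚ) (hb : b ≠ 0) (hab : a + b ≠ 0) : (a/b)/(1+a/b) = a/(a+b) := by
  have h1 : 1 + a/b ≠ 0 := by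
    rw [one_add_div hb]; exact div_ne_zero (by rw [add_comm] at hab; exact hab) hb
  rw [div_eq_div_iff h1 hab]; field_simp; ring

lemma helperR (a b : ℚ) (hb : b ≠ 0) (hab : 2*b - a ≠ 0) : 1/(2 - a/b) = b/(2*b-a) := by
  have h1 : 2 - a/b ≠ 0 := by
    rw [show (2:ℚ) - a/b = (2*b-a)/b by field_simp]
    exact div_ne_zero hab hb
  rw [div_eq_div_iff h1 hab]; field_simp

lemma farey_L {y z x : ℚ} (hy0 : 0 ≤ y) (hz0 : 0 < z) (h : FareyPair y z x) :
    FareyPair (y / (1 + y)) (z / (1 + z)) (x / (1 + x)) := by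
  obtain ⟨p, q, r, s, hq, hs, hdet, hy, hz, hx⟩ := h
  have hq' : (0:ℚ) < q := by exact_mod_cast hq
  have hs' : (0:ℚ) < s := by exact_mod_cast hs
  have hp : 0 ≤ (p:ℚ) := by
    rw [hy, le_div_iff₀ hq'] at hy0; simpa using hy0
  have hr : 0 < (r:ℚ) := by
    rw [hz, lt_div_iff₀ hs'] at hz0; simpa using hz0
  have hpq : (0:ℚ) < p + q := by linarith
  have hrs : (0:ℚ) < r + s := by linarith
  refine ⟨p, p + q, r, r + s, by exact_mod_cast hpq, by exact_mod_cast hrs,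
    by linear_combination hdet, ?_, ?_, ?_⟩
  · subst hy; push_cast; rw [helperL _ _ hq'.ne' hpq.ne']
  · subst hz; push_cast; rw [helperL _ _ hs'.ne' hrs.ne']
  · subst hx; push_cast
    rw [helperL _ _ (by linarith : (q:ℚ) + s ≠ 0) (by linarith : (p:ℚ) + r + ((q:ℚ) + s) ≠ 0)]
    ring_nf

lemma farey_R {y z x : ℚ} (hy1 : y < 1) (hz1 : z ≤ 1) (h : FareyPair y z x) :
    FareyPair (1 / (2 - y)) (1 / (2 - z)) (1 / (2 - x)) := by
  obtain ⟨p, q, r, s, hq, hs, hdet, hy, hz, hx⟩ := h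
  have hq' : (0:ℚ) < q := by exact_mod_cast hq
  have hs' : (0:ℚ) < s := by exact_mod_cast hs
  have hp : (p:ℚ) < q := by
    rw [hy, div_lt_one hq'] at hy1; exact hy1
  have hr : (r:ℚ) ≤ s := by
    rw [hz, div_le_one hs'] at hz1; exact hz1
  have hpq : (0:ℚ) < 2*q - p := by linarith
  have hrs : (0:ℚ) < 2*s - r := by linarith
  refine ⟨q, 2*q - p, s, 2*s - r, by exact_mod_cast hpq, by exact_mod_cast hrs,
    by linear_combination hdet, ?_, ?_, ?_⟩
  · subst hy; push_cast; rw [helperR _ _ hq'.ne' hpq.ne']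
  · subst hz; push_cast; rw [helperR _ _ hs'.ne' hrs.ne']
  · subst hx; push_cast
    rw [helperR _ _ (by linarith : (q:ℚ) + s ≠ 0)
      (by push_cast; linarith : 2*((q:ℚ) + s) - ((p:ℚ) + r) ≠ 0)]
    ring_nf

lemma SB_appendL {x : ℚ} {w : List LR} (h : SB x w) : SB (x / (1 + x)) (w ++ [LR.L]) := by
  induction h with
  | half =>
      rw [show (1:ℚ)/2 / (1 + 1/2) = 1/3 by norm_num]
      exact SB.lbase (1/2) _ [] ⟨0, 1, 1, 2, by norm_num, by norm_num, by norm_num,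
        by norm_num, by norm_num, by norm_num⟩ SB.half
  | left y z x w₁ w₂ hf hy hz hlen ihy ihz =>
      exact SB.left (y/(1+y)) (z/(1+z)) _ (w₁ ++ [LR.L]) (w₂ ++ [LR.L])
        (farey_L (SB_mem hy).1.le (SB_mem hz).1 hf) ihy ihz (by simpa using hlen)
  | right y z x w₁ w₂ hf hy hz hlen ihy ihz =>
      exact SB.right (y/(1+y)) (z/(1+z)) _ (w₁ ++ [LR.L]) (w₂ ++ [LR.L])
        (farey_L (SB_mem hy).1.le (SB_mem hz).1 hf) ihy ihz (by simpa using hlen)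
  | lbase z x w₂ hf hz ihz =>
      have h2 := farey_L le_rfl (SB_mem hz).1 hf
      rw [show (0:ℚ)/(1+0) = 0 by norm_num] at h2
      exact SB.lbase (z/(1+z)) _ (w₂ ++ [LR.L]) h2 ihz
  | rbase y x w₁ hf hy ihy =>
      have h2 := farey_L (SB_mem hy).1.le one_pos hf
      rw [show (1:ℚ)/(1+1) = 1/2 by norm_num] at h2
      exact SB.right (y/(1+y)) (1/2) _ (w₁ ++ [LR.L]) [] h2 ihy SB.half (by simp)

lemma SB_appendR {x : ℚ} {w : List LR} (h : SB x w) : SB (1 / (2 - x)) (w ++ [LR.R]) := by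
  induction h with
  | half =>
      rw [show (1:ℚ) / (2 - 1/2) = 2/3 by norm_num]
      exact SB.rbase (1/2) _ [] ⟨1, 2, 1, 1, by norm_num, by norm_num, by norm_num,
        by norm_num, by norm_num, by norm_num⟩ SB.half
  | left y z x w₁ w₂ hf hy hz hlen ihy ihz =>
      exact SB.left (1/(2-y)) (1/(2-z)) _ (w₁ ++ [LR.R]) (w₂ ++ [LR.R])
        (farey_R (SB_mem hy).2 (SB_mem hz).2.le hf) ihy ihz (by simpa using hlen)
  | right y z x w₁ w₂ hf hy hz hlen ihy ihz =>
      exact SB.right (1/(2-y)) (1/(2-z)) _ (w₁ ++ [LR.R]) (w₂ ++ [LR.R])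
        (farey_R (SB_mem hy).2 (SB_mem hz).2.le hf) ihy ihz (by simpa using hlen)
  | lbase z x w₂ hf hz ihz =>
      have h2 := farey_R one_pos (SB_mem hz).2.le hf
      rw [show (1:ℚ)/(2-0) = 1/2 by norm_num] at h2
      exact SB.left (1/2) (1/(2-z)) _ [] (w₂ ++ [LR.R]) h2 SB.half ihz (by simp)
  | rbase y x w₁ hf hy ihy =>
      have h2 := farey_R (SB_mem hy).2 le_rfl hf
      rw [show (1:ℚ)/(2-1) = 1 by norm_num] at h2
      exact SB.rbase (1/(2-y)) _ (w₁ ++ [LR.R]) h2 ihy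

lemma cf_cons (a : ℕ) (l : List ℕ) : cf (a :: l) = (a : ℚ) + 1 / cf l := rfl

lemma cf_nonneg (l : List ℕ) : 0 ≤ cf l := by
  induction l with
  | nil => simp [cf]
  | cons a t ih =>
      simp only [cf]
      have h1 : (0:ℚ) ≤ 1 / cf t := one_div_nonneg.mpr ih
      have h2 : (0:ℚ) ≤ (a:ℚ) := Nat.cast_nonneg a
      linarith

lemma cf_ge_one (a : ℕ) (l : List ℕ) (ha : 0 < a) : 1 ≤ cf (a :: l) := by
  simp only [cf]
  have h1 : (0:ℚ) ≤ 1 / cf l := one_div_nonneg.mpr (cf_nonneg l)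
  have h2 : (1:ℚ) ≤ (a:ℚ) := by exact_mod_cast ha
  linarith

theorem SB_append_contFrac' (a₂ : ℕ) (rest : List ℕ)
    (hpos : ∀ a ∈ a₂ :: rest, 0 < a) (hodd : Odd (a₂ :: rest).length)
    (w : List LR) (hw : SB (1 / cf (a₂ :: rest)) (iop w)) :
    SB (1 / cf (1 :: a₂ :: rest)) (w ++ [LR.R]) ∧
      SB (1 / cf (2 :: (a₂ - 1) :: rest)) (w ++ [LR.L]) ∧
      SB (1 / cf (1 :: (a₂ - 1) :: rest)) w := by
  have ha₂ : 1 ≤ a₂ := hpos a₂ (by simp)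
  have hlt := (SB_mem hw).2
  have hne : ¬(a₂ = 1 ∧ rest = []) := by
    rintro ⟨rfl, rfl⟩
    norm_num [cf] at hlt
  set c := cf ((a₂ - 1) :: rest) with hcdef
  have hc : 0 < c := by
    rcases Nat.lt_or_ge a₂ 2 with h2 | h2
    · have ha1 : a₂ = 1 := le_antisymm (by omega) ha₂
      have hrest : rest ≠ [] := fun h => hne ⟨ha1, h⟩
      obtain ⟨b, t, rfl⟩ := List.exists_cons_of_ne_nil hrest
      have hb : 0 < b := hpos b (by simp)
      have h1 : (1:ℚ) ≤ cf (b :: t) := cf_ge_one b t hb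
      rw [hcdef, cf_cons, ha1]
      simp only [show (1 - 1 : ℕ) = 0 from rfl, Nat.cast_zero, zero_add]
      exact one_div_pos.mpr (by linarith)
    · have key : (1:ℚ) ≤ ((a₂ - 1 : ℕ) : ℚ) := by
        have : 1 ≤ a₂ - 1 := by omega
        exact_mod_cast this
      have h1 : (0:ℚ) ≤ 1 / cf rest := one_div_nonneg.mpr (cf_nonneg rest)
      rw [hcdef]; simp only [cf]; linarith
  have hc1 : c + 1 ≠ 0 := by positivity
  have key : ((a₂ - 1 : ℕ) : ℚ) = (a₂ : ℚ) - 1 := by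
    push_cast [ha₂]; ring
  have e0 : cf (a₂ :: rest) = c + 1 := by
    rw [hcdef]; simp only [cf, key]; ring
  have hw' : SB (1 - 1/(c+1)) w := by
    have := SB_compl hw
    rwa [iop_iop, e0] at this
  refine ⟨?_, ?_, ?_⟩
  · have e1 : 1 / cf (1 :: a₂ :: rest) = 1 / (2 - (1 - 1/(c+1))) := by
      rw [cf_cons, e0]; push_cast; congr 1; ring
    rw [e1]; exact SB_appendR hw'
  · have e2 : 1 / cf (2 :: (a₂ - 1) :: rest) =
        (1 - 1/(c+1)) / (1 + (1 - 1/(c+1))) := by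
      rw [cf_cons, ← hcdef]; push_cast
      rw [show (1:ℚ) - 1/(c+1) = c/(c+1) by field_simp; ring]
      rw [helperL _ _ hc1 (by positivity)]
      rw [show (2:ℚ) + 1/c = (2*c+1)/c by field_simp]
      rw [one_div_div]
      congr 1
      ring
    rw [e2]; exact SB_appendL hw'
  · have e3 : 1 / cf (1 :: (a₂ - 1) :: rest) = 1 - 1/(c+1) := by
      rw [cf_cons, ← hcdef]; push_cast
      rw [show (1:ℚ) + 1/c = (c+1)/c by field_simp, one_div_div]
      field_simp; ring
    rw [e3]; exact hw'

/-- If i(w) corresponds to the continued fraction [0; a₂, …, a_m] (m even, i.e. the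
list of partial quotients has odd length), then wR corresponds to [0; 1, a₂, …, a_m],
wL corresponds to [0; 2, a₂ - 1, a₃, …, a_m], and w itself corresponds to
[0; 1, a₂ - 1, a₃, …, a_m]. -/
theorem SB_append_contFrac (a₂ : ℕ) (rest : List ℕ)
    (hpos : ∀ a ∈ a₂ :: rest, 0 < a) (hodd : Odd (a₂ :: rest).length)
    (w : List LR) (hw : SB (1 / cf (a₂ :: rest)) (iop w)) :
    SB (1 / cf (1 :: a₂ :: rest)) (w ++ [LR.R]) ∧
      SB (1 / cf (2 :: (a₂ - 1) :: rest)) (w ++ [LR.L]) ∧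
      SB (1 / cf (1 :: (a₂ - 1) :: rest)) w := by
  exact SB_append_contFrac' a₂ rest hpos hodd w hw
end

section
/- Define v(φ(·)) ∈ ℤ[A, A⁻¹] on ℚ₊ ∪ {∞} by v(φ(0)) = 1, v(φ(∞)) = A⁶·(-A²-A⁻²), and v(φ(x)) = -A⁴·v(φ(y)) - A⁻⁴·v(φ(z)) for x the mediant of its parents (y, z). Then for every irreducible fraction p/q with 1 ≤ p ≤ q, the involution A ↦ A⁻¹ applied to v(φ(p/q)) yields v(φ((q-p)/q)), i.e., conjugate of v(φ(p/q)) equals v(φ((q-p)/q)). -/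
open LaurentPolynomial

/-- The fraction p/q viewed in ℚ₊ ∪ {∞}, with p/0 = ∞. -/
def toW (p q : ℕ) : WithTop ℚ≥0 := if q = 0 then ⊤ else (((p : ℚ≥0) / q : ℚ≥0) : WithTop ℚ≥0)

/-- `IsParents y z x` : (y, z) are Farey neighbors (q*r - p*s = 1, with 1/0 = ∞ allowed)
whose mediant is x. -/
def IsParents (y z x : WithTop ℚ≥0) : Prop :=
  ∃ p q r s : ℕ, q * r = p * s + 1 ∧ y = toW p q ∧ z = toW r s ∧ x = toW (p + r) (q + s)

lemma toW_zero_one : toW 0 1 = 0 := by simp [toW]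

lemma toW_one_zero : toW 1 0 = ⊤ := by simp [toW]

lemma aux_v_phi (vφ : WithTop ℚ≥0 → LaurentPolynomial ℤ)
    (h0 : vφ 0 = 1) (hinf : vφ ⊤ = T 6 * (-T 2 - T (-2)))
    (hrec : ∀ x y z, IsParents y z x → vφ x = -T 4 * vφ y - T (-4) * vφ z) :
    ∀ q, 1 ≤ q → ∀ p, p ≤ q → Nat.Coprime p q →
      invert (vφ (toW p q)) = vφ (toW (q - p) q) := by
  have h11 : vφ (toW 1 1) = 1 := by
    have hP : IsParents (toW 0 1) (toW 1 0) (toW 1 1) :=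
      ⟨0, 1, 1, 0, by norm_num, rfl, rfl, rfl⟩
    rw [hrec _ _ _ hP, toW_zero_one, toW_one_zero, h0, hinf]
    simp only [mul_sub, mul_neg, mul_one, ← mul_assoc, ← T_add, Int.reduceAdd, Int.reduceNeg,
      sub_neg_eq_add, T_zero]
    ring
  intro q
  induction q using Nat.strong_induction_on with
  | _ q IH =>
    intro hq p hpq hcop
    rcases eq_or_lt_of_le hq with h1 | h2
    · -- q = 1
      subst h1
      interval_cases p
      · rw [toW_zero_one, h0, map_one]
        norm_num [h11]
      · rw [h11, map_one]
        norm_num [toW_zero_one, h0]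
    · -- 2 ≤ q
      have hq2 : 2 ≤ q := h2
      have hp1 : 1 ≤ p := by
        rcases Nat.eq_zero_or_pos p with h | h
        · subst h; rw [Nat.coprime_zero_left] at hcop; omega
        · exact h
      have hplt : p < q := by
        rcases eq_or_lt_of_le hpq with h | h
        · exfalso; rw [h, Nat.coprime_self] at hcop; omega
        · exact h
      obtain ⟨m, -, hm⟩ := Nat.exists_mul_mod_eq_one_of_coprime hcop h2
      set b := m % q with hb
      have hbp : b * p % q = 1 := by
        rw [hb, Nat.mul_mod, Nat.mod_mod_of_dvd _ dvd_rfl, ← Nat.mul_mod, Nat.mul_comm, hm]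
      have hb1 : 1 ≤ b := by
        rcases Nat.eq_zero_or_pos b with h | h
        · rw [h, Nat.zero_mul, Nat.zero_mod] at hbp; omega
        · exact h
      have hbq : b < q := Nat.mod_lt _ (by omega)
      have key : b * p = b * p / q * q + 1 := by
        conv_lhs => rw [← Nat.div_add_mod (b * p) q]
        rw [hbp, Nat.mul_comm]
      set a := b * p / q with ha
      -- a < b
      have hab : a < b := by nlinarith [key, hplt, hb1]
      -- a < p
      have hap : a < p := by nlinarith [key, hbq, hp1]
      obtain ⟨c, hc⟩ : ∃ c, p = a + c := ⟨p - a, by omega⟩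
      obtain ⟨d, hd⟩ : ∃ d, q = b + d := ⟨q - b, by omega⟩
      have hc1 : 1 ≤ c := by omega
      have hd1 : 1 ≤ d := by omega
      have hbc : b * c = a * d + 1 := by
        have e1 : b * p = b * a + b * c := by rw [hc, Nat.mul_add]
        have e2 : a * q = a * b + a * d := by rw [hd, Nat.mul_add]
        have e3 : a * q + 1 = b * p := by rw [← key]
        linarith [e1, e2, e3]
      have hcd : c ≤ d := by
        by_contra hlt
        push_neg at hlt
        have h1' : b * (d + 1) ≤ b * c := Nat.mul_le_mul_left b hlt
        have h2' : (a + 1) * d ≤ b * d := Nat.mul_le_mul_right d hab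
        linarith [hbc, h1', h2', hb1, hd1]
      have hcop_ab : Nat.Coprime a b := by
        have h1' : Nat.gcd a b ∣ b * c - a * d :=
          Nat.dvd_sub ((Nat.gcd_dvd_right a b).mul_right c) ((Nat.gcd_dvd_left a b).mul_right d)
        rw [hbc, Nat.add_sub_cancel_left] at h1'
        exact Nat.dvd_one.mp h1'
      have hcop_cd : Nat.Coprime c d := by
        have h1' : Nat.gcd c d ∣ b * c - a * d :=
          Nat.dvd_sub ((Nat.gcd_dvd_left c d).mul_left b) ((Nat.gcd_dvd_right c d).mul_left a)
        rw [hbc, Nat.add_sub_cancel_left] at h1'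
        exact Nat.dvd_one.mp h1'
      obtain ⟨e, he⟩ : ∃ e, b = a + e := ⟨b - a, by omega⟩
      obtain ⟨f, hf⟩ : ∃ f, d = c + f := ⟨d - c, by omega⟩
      have hde : d * e = f * b + 1 := by
        have e1 : d * b = d * a + d * e := by rw [he, Nat.mul_add]
        have e2 : d * b = c * b + f * b := by rw [hf, Nat.add_mul]
        linarith [hbc, e1, e2]
      have hpar : IsParents (toW a b) (toW c d) (toW p q) :=
        ⟨a, b, c, d, hbc, rfl, rfl, by rw [hc, hd]⟩
      have hpar2 : IsParents (toW f d) (toW e b) (toW (q - p) q) := by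
        refine ⟨f, d, e, b, hde, rfl, rfl, ?_⟩
        have e1 : q - p = f + e := by omega
        have e2 : q = d + b := by omega
        rw [e1, e2]
      have ihb := IH b (by omega) hb1 a (by omega) hcop_ab
      have ihd := IH d (by omega) hd1 c hcd hcop_cd
      have eb : b - a = e := by omega
      have fd : d - c = f := by omega
      rw [eb] at ihb
      rw [fd] at ihd
      rw [hrec _ _ _ hpar, hrec _ _ _ hpar2]
      simp only [map_sub, map_neg, map_mul, invert_T, neg_neg, ihb, ihd]
      ring

/-- Let v∘φ : ℚ₊ ∪ {∞} → ℤ[A,A⁻¹] satisfy v(φ(0)) = 1, v(φ(∞)) = A⁶·(-A² - A⁻²)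
and v(φ(x)) = -A⁴·v(φ(y)) - A⁻⁴·v(φ(z)) for x the mediant of its parents (y,z).
Then for every irreducible fraction p/q with 1 ≤ p ≤ q, applying the involution
A ↦ A⁻¹ (the algebra involution `invert` of ℤ[A,A⁻¹]) to v(φ(p/q)) gives
v(φ((q-p)/q)). -/
theorem invert_v_phi (vφ : WithTop ℚ≥0 → LaurentPolynomial ℤ)
    (h0 : vφ 0 = 1) (hinf : vφ ⊤ = T 6 * (-T 2 - T (-2)))
    (hrec : ∀ x y z, IsParents y z x → vφ x = -T 4 * vφ y - T (-4) * vφ z)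
    (p q : ℕ) (hp : 1 ≤ p) (hpq : p ≤ q) (hcop : Nat.Coprime p q) :
    invert (vφ (toW p q)) = vφ (toW (q - p) q) := by
  exact aux_v_phi vφ h0 hinf hrec q (le_trans hp hpq) p hpq hcop
end

section
/- For every LR word w, applying the ring involution A ↦ A⁻¹ of ℤ[A, A⁻¹] to ⟨Γ(w)⟩ gives ⟨Γ(i(w))⟩, where i swaps L and R in the word; i.e., ⟨Γ(i(w))⟩ = conjugate of ⟨Γ(w)⟩. -/
open LaurentPolynomial


lemma int_bounded_dvd {b m : ℤ} (hb : 0 < b) (h : b ∣ m) (h1 : -b < m) (h2 : m < b) : m = 0 := by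
  obtain ⟨k, rfl⟩ := h
  rcases lt_trichotomy k 0 with hk | hk | hk
  · nlinarith
  · simp [hk]
  · nlinarith

lemma rep_unique {a b a' b' c d c' d' : ℤ} (hb : 0 < b) (hb' : 0 < b')
    (h : c * a - d * b = 1) (h' : c' * a' - d' * b' = 1)
    (heq : (a : ℚ) / b = (a' : ℚ) / b') : a = a' ∧ b = b' := by
  have hbq : (0:ℚ) < (b:ℚ) := by exact_mod_cast hb
  have hbq' : (0:ℚ) < (b':ℚ) := by exact_mod_cast hb'
  rw [div_eq_div_iff hbq.ne' hbq'.ne'] at heq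
  have hcross : a * b' = a' * b := by exact_mod_cast heq
  have h1 : b ∣ b' := ⟨c * a' - d * b', by linear_combination (-b') * h + c * hcross⟩
  have h2 : b' ∣ b := ⟨c' * a - d' * b, by linear_combination (-b) * h' - c' * hcross⟩
  have hbb : b = b' := Int.dvd_antisymm hb.le hb'.le h1 h2
  subst hbb
  exact ⟨mul_right_cancel₀ (show b ≠ 0 by omega) hcross, rfl⟩

lemma left_uniq {r s p q p' q' : ℤ} (hs : 0 < s)
    (h : q * r - p * s = 1) (h' : q' * r - p' * s = 1)
    (hq : 0 < q) (hqs : q < s) (hq' : 0 < q') (hqs' : q' < s) : q = q' ∧ p = p' := by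
  have hd : s ∣ q - q' := ⟨p * q' - p' * q, by linear_combination q' * h - q * h'⟩
  have h0 : q - q' = 0 := int_bounded_dvd hs hd (by omega) (by omega)
  have hqq : q = q' := by omega
  subst hqq
  constructor
  · rfl
  · have : p * s = p' * s := by linarith
    exact mul_right_cancel₀ (by omega : s ≠ 0) this

lemma right_uniq {p q r s r' s' : ℤ} (hq : 0 < q)
    (h : q * r - p * s = 1) (h' : q * r' - p * s' = 1)
    (hs : 0 < s) (hsq : s < q) (hs' : 0 < s') (hsq' : s' < q) : s = s' ∧ r = r' := by
  have hd : q ∣ s - s' := ⟨s * r' - s' * r, by linear_combination s' * h - s * h'⟩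
  have h0 : s - s' = 0 := int_bounded_dvd hq hd (by omega) (by omega)
  have hss : s = s' := by omega
  subst hss
  refine ⟨rfl, ?_⟩
  have : q * r = q * r' := by linarith
  exact mul_left_cancel₀ (by omega : q ≠ 0) this

-- pulling integer bounds from rational inequalities
lemma num_bounds {y : ℚ} {p q : ℤ} (hq : 0 < q) (hy : y = (p:ℚ)/q)
    (h0 : 0 < y) (h1 : y < 1) : 0 < p ∧ p < q := by
  have hqq : (0:ℚ) < (q:ℚ) := by exact_mod_cast hq
  subst hy
  constructor
  · have := (div_pos_iff).mp h0
    rcases this with ⟨hp, _⟩ | ⟨_, hq'⟩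
    · exact_mod_cast hp
    · linarith
  · have := (div_lt_one hqq).mp h1
    exact_mod_cast this

lemma zero_rep {p q : ℤ} (hq : 0 < q) (h : (0:ℚ) = (p:ℚ)/q) : p = 0 := by
  have hqq : ((q:ℚ)) ≠ 0 := by positivity
  field_simp at h
  simpa using h.symm

lemma one_rep {r s : ℤ} (hs : 0 < s) (h : (1:ℚ) = (r:ℚ)/s) : r = s := by
  have hqq : ((s:ℚ)) ≠ 0 := by positivity
  field_simp at h
  exact_mod_cast h.symm

lemma mul_eq_one_pos {a b : ℤ} (ha : 0 < a) (h : a * b = 1) : a = 1 ∧ b = 1 := by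
  have hb : 0 < b := by nlinarith
  have h1 : a ≤ 1 := by nlinarith
  have h2 : b ≤ 1 := by nlinarith
  constructor <;> nlinarith

-- no integer strictly between 0 and 1 (as rational)
lemma no_int_in_01 {r : ℤ} (h0 : (0:ℚ) < (r:ℚ)) (h1 : ((r:ℚ)) < 1) : False := by
  have : 0 < r := by exact_mod_cast h0
  have : r < 1 := by exact_mod_cast h1
  omega

-- key: if q - p*s = 1 with 0 < q < s then p = 0
lemma small_left_of_unit_num {p q s : ℤ} (hq : 0 < q) (hs : 0 < s) (hqs : q < s)
    (h : q - p * s = 1) : p = 0 := by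
  rcases lt_trichotomy p 0 with hp | hp | hp
  · nlinarith
  · exact hp
  · nlinarith

-- Positivity: every SB rational is in (0,1)
lemma sb_pos {α : ℚ} {w : List LR} (h : SB α w) : 0 < α ∧ α < 1 := by
  induction h with
  | half => norm_num
  | left y z x w₁ w₂ hfp hy hz hlen ih1 ih2 =>
    obtain ⟨p, q, r, s, hq, hs, hd, hyq, hzq, hx⟩ := hfp
    obtain ⟨hp, hpq⟩ := num_bounds hq hyq ih1.1 ih1.2
    obtain ⟨hr, hrs⟩ := num_bounds hs hzq ih2.1 ih2.2
    have hden : (0:ℚ) < (q:ℚ) + s := by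
      have : (0:ℚ) < (q:ℚ) := by exact_mod_cast hq
      have : (0:ℚ) < (s:ℚ) := by exact_mod_cast hs
      linarith
    rw [hx]
    constructor
    · apply div_pos _ hden
      have : (0:ℚ) < (p:ℚ) := by exact_mod_cast hp
      have : (0:ℚ) < (r:ℚ) := by exact_mod_cast hr
      linarith
    · rw [div_lt_one hden]
      have h1 : ((p:ℚ)) < q := by exact_mod_cast hpq
      have h2 : ((r:ℚ)) < s := by exact_mod_cast hrs
      linarith
  | right y z x w₁ w₂ hfp hy hz hlen ih1 ih2 =>
    obtain ⟨p, q, r, s, hq, hs, hd, hyq, hzq, hx⟩ := hfp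
    obtain ⟨hp, hpq⟩ := num_bounds hq hyq ih1.1 ih1.2
    obtain ⟨hr, hrs⟩ := num_bounds hs hzq ih2.1 ih2.2
    have hden : (0:ℚ) < (q:ℚ) + s := by
      have : (0:ℚ) < (q:ℚ) := by exact_mod_cast hq
      have : (0:ℚ) < (s:ℚ) := by exact_mod_cast hs
      linarith
    rw [hx]
    constructor
    · apply div_pos _ hden
      have : (0:ℚ) < (p:ℚ) := by exact_mod_cast hp
      have : (0:ℚ) < (r:ℚ) := by exact_mod_cast hr
      linarith
    · rw [div_lt_one hden]
      have h1 : ((p:ℚ)) < q := by exact_mod_cast hpq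
      have h2 : ((r:ℚ)) < s := by exact_mod_cast hrs
      linarith
  | lbase z x w₂ hfp hz ih =>
    obtain ⟨p, q, r, s, hq, hs, hd, hyq, hzq, hx⟩ := hfp
    have hp0 : p = 0 := zero_rep hq hyq
    obtain ⟨hr, hrs⟩ := num_bounds hs hzq ih.1 ih.2
    have hden : (0:ℚ) < (q:ℚ) + s := by
      have : (0:ℚ) < (q:ℚ) := by exact_mod_cast hq
      have : (0:ℚ) < (s:ℚ) := by exact_mod_cast hs
      linarith
    rw [hx, hp0]
    constructor
    · apply div_pos _ hden
      have : (0:ℚ) < (r:ℚ) := by exact_mod_cast hr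
      push_cast
      linarith
    · rw [div_lt_one hden]
      have h2 : ((r:ℚ)) < s := by exact_mod_cast hrs
      have : (0:ℚ) < (q:ℚ) := by exact_mod_cast hq
      push_cast
      linarith
  | rbase y x w₁ hfp hy ih =>
    obtain ⟨p, q, r, s, hq, hs, hd, hyq, hzq, hx⟩ := hfp
    have hrs : r = s := one_rep hs hzq
    obtain ⟨hp, hpq⟩ := num_bounds hq hyq ih.1 ih.2
    have hden : (0:ℚ) < (q:ℚ) + s := by
      have : (0:ℚ) < (q:ℚ) := by exact_mod_cast hq
      have : (0:ℚ) < (s:ℚ) := by exact_mod_cast hs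
      linarith
    rw [hx]
    constructor
    · apply div_pos _ hden
      have h1 : (0:ℚ) < (p:ℚ) := by exact_mod_cast hp
      have h2 : (0:ℚ) < (r:ℚ) := by exact_mod_cast (hrs ▸ hs)
      linarith
    · rw [div_lt_one hden]
      have h1 : ((p:ℚ)) < q := by exact_mod_cast hpq
      have h2 : ((r:ℚ)) = s := by exact_mod_cast hrs
      linarith

-- uniqueness of the Farey parents of a rational
lemma fp_unique_tuple {p q r s p' q' r' s' : ℤ}
    (hq : 0 < q) (hs : 0 < s) (hq' : 0 < q') (hs' : 0 < s')
    (hd : q * r - p * s = 1) (hd' : q' * r' - p' * s' = 1)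
    (hx : ((p:ℚ) + r) / ((q:ℚ) + s) = ((p':ℚ) + r') / ((q':ℚ) + s')) :
    p = p' ∧ q = q' ∧ r = r' ∧ s = s' := by
  have hx' : (((p+r : ℤ)):ℚ) / ((q+s : ℤ):ℚ) = (((p'+r' : ℤ)):ℚ) / ((q'+s' : ℤ):ℚ) := by
    push_cast
    exact hx
  have hw : q * (p+r) - p * (q+s) = 1 := by linear_combination hd
  have hw' : q' * (p'+r') - p' * (q'+s') = 1 := by linear_combination hd'
  obtain ⟨ha, hb⟩ := rep_unique (by omega) (by omega) hw hw' hx'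
  -- now (r - r') * (q+s) = (s - s') * (p+r)
  have e1 : r * (q+s) - s * (p+r) = 1 := by linear_combination hd
  have e2 : r' * (q+s) - s' * (p+r) = 1 := by
    rw [ha, hb]
    linear_combination hd'
  have hdv : (q + s) ∣ (s - s') := ⟨s * r' - s' * r, by linear_combination s' * e1 - s * e2⟩
  have hss : s - s' = 0 := int_bounded_dvd (by omega) hdv (by omega) (by omega)
  have hs2 : s = s' := by omega
  have hq2 : q = q' := by omega
  have hr2 : r = r' := by
    have : r * (q + s) = r' * (q + s) := by
      rw [sub_eq_iff_eq_add] at e1 e2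
      rw [e1, e2, hs2]
    exact mul_right_cancel₀ (by omega) this
  exact ⟨by omega, hq2, hr2, hs2⟩

lemma fp_unique' {y z y' z' x : ℚ} (h : FareyPair y z x) (h' : FareyPair y' z' x) :
    y = y' ∧ z = z' := by
  obtain ⟨p, q, r, s, hq, hs, hd, hyq, hzq, hx⟩ := h
  obtain ⟨p', q', r', s', hq', hs', hd', hyq', hzq', hx'⟩ := h'
  obtain ⟨e1, e2, e3, e4⟩ := fp_unique_tuple hq hs hq' hs' hd hd' (hx ▸ hx' ▸ rfl)
  subst e1 e2 e3 e4
  exact ⟨hyq.trans hyq'.symm, hzq.trans hzq'.symm⟩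

lemma fp_base {y z : ℚ} (h : FareyPair y z (1/2)) : y = 0 ∧ z = 1 := by
  have h2 : FareyPair 0 1 (1/2) := ⟨0, 1, 1, 1, by norm_num, by norm_num, by norm_num,
    by norm_num, by norm_num, by norm_num⟩
  obtain ⟨e1, e2⟩ := fp_unique' h h2
  exact ⟨e1, e2⟩

-- functionality: the word of a rational is unique
lemma sb_word_unique {α : ℚ} {w : List LR} (h : SB α w) :
    ∀ w', SB α w' → w = w' := by
  induction h with
  | half =>
    intro w' h'
    cases h' with
    | half => rfl
    | left y' z' x' w₁' w₂' hfp' hy' hz' hlen' =>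
      exact absurd ((fp_base hfp').1 ▸ (sb_pos hy').1) (lt_irrefl 0)
    | right y' z' x' w₁' w₂' hfp' hy' hz' hlen' =>
      exact absurd ((fp_base hfp').1 ▸ (sb_pos hy').1) (lt_irrefl 0)
    | lbase z' x' w₂' hfp' hz' =>
      exact absurd ((fp_base hfp').2 ▸ (sb_pos hz').2) (lt_irrefl 1)
    | rbase y' x' w₁' hfp' hy' =>
      exact absurd ((fp_base hfp').1 ▸ (sb_pos hy').1) (lt_irrefl 0)
  | left y z x w₁ w₂ hfp hy hz hlen ih1 ih2 =>
    intro w' h'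
    cases h' with
    | half =>
      exact absurd ((fp_base hfp).1 ▸ (sb_pos hy).1) (lt_irrefl 0)
    | left y' z' x' w₁' w₂' hfp' hy' hz' hlen' =>
      obtain ⟨e1, e2⟩ := fp_unique' hfp hfp'
      rw [ih2 w₂' (e2 ▸ hz')]
    | right y' z' x' w₁' w₂' hfp' hy' hz' hlen' =>
      obtain ⟨e1, e2⟩ := fp_unique' hfp hfp'
      have u1 := ih1 w₁' (e1 ▸ hy')
      have u2 := ih2 w₂' (e2 ▸ hz')
      rw [u1, u2] at hlen
      omega
    | lbase z' x' w₂' hfp' hz' =>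
      obtain ⟨e1, e2⟩ := fp_unique' hfp hfp'
      exact absurd (e1 ▸ (sb_pos hy).1) (lt_irrefl 0)
    | rbase y' x' w₁' hfp' hy' =>
      obtain ⟨e1, e2⟩ := fp_unique' hfp hfp'
      exact absurd (e2 ▸ (sb_pos hz).2) (lt_irrefl 1)
  | right y z x w₁ w₂ hfp hy hz hlen ih1 ih2 =>
    intro w' h'
    cases h' with
    | half =>
      exact absurd ((fp_base hfp).1 ▸ (sb_pos hy).1) (lt_irrefl 0)
    | left y' z' x' w₁' w₂' hfp' hy' hz' hlen' =>
      obtain ⟨e1, e2⟩ := fp_unique' hfp hfp'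
      have u1 := ih1 w₁' (e1 ▸ hy')
      have u2 := ih2 w₂' (e2 ▸ hz')
      rw [u1, u2] at hlen
      omega
    | right y' z' x' w₁' w₂' hfp' hy' hz' hlen' =>
      obtain ⟨e1, e2⟩ := fp_unique' hfp hfp'
      rw [ih1 w₁' (e1 ▸ hy')]
    | lbase z' x' w₂' hfp' hz' =>
      obtain ⟨e1, e2⟩ := fp_unique' hfp hfp'
      exact absurd (e1 ▸ (sb_pos hy).1) (lt_irrefl 0)
    | rbase y' x' w₁' hfp' hy' =>
      obtain ⟨e1, e2⟩ := fp_unique' hfp hfp'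
      exact absurd (e2 ▸ (sb_pos hz).2) (lt_irrefl 1)
  | lbase z x w₂ hfp hz ih =>
    intro w' h'
    cases h' with
    | half =>
      exact absurd ((fp_base hfp).2 ▸ (sb_pos hz).2) (lt_irrefl 1)
    | left y' z' x' w₁' w₂' hfp' hy' hz' hlen' =>
      obtain ⟨e1, e2⟩ := fp_unique' hfp hfp'
      have h0 := (sb_pos hy').1
      rw [← e1] at h0
      exact absurd h0 (lt_irrefl 0)
    | right y' z' x' w₁' w₂' hfp' hy' hz' hlen' =>
      obtain ⟨e1, e2⟩ := fp_unique' hfp hfp'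
      have h0 := (sb_pos hy').1
      rw [← e1] at h0
      exact absurd h0 (lt_irrefl 0)
    | lbase z' x' w₂' hfp' hz' =>
      obtain ⟨e1, e2⟩ := fp_unique' hfp hfp'
      rw [ih w₂' (e2 ▸ hz')]
    | rbase y' x' w₁' hfp' hy' =>
      obtain ⟨e1, e2⟩ := fp_unique' hfp hfp'
      have h0 := (sb_pos hy').1
      rw [← e1] at h0
      exact absurd h0 (lt_irrefl 0)
  | rbase y x w₁ hfp hy ih =>
    intro w' h'
    cases h' with
    | half =>
      exact absurd ((fp_base hfp).1 ▸ (sb_pos hy).1) (lt_irrefl 0)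
    | left y' z' x' w₁' w₂' hfp' hy' hz' hlen' =>
      obtain ⟨e1, e2⟩ := fp_unique' hfp hfp'
      have h0 := (sb_pos hz').2
      rw [← e2] at h0
      exact absurd h0 (lt_irrefl 1)
    | right y' z' x' w₁' w₂' hfp' hy' hz' hlen' =>
      obtain ⟨e1, e2⟩ := fp_unique' hfp hfp'
      have h0 := (sb_pos hz').2
      rw [← e2] at h0
      exact absurd h0 (lt_irrefl 1)
    | lbase z' x' w₂' hfp' hz' =>
      obtain ⟨e1, e2⟩ := fp_unique' hfp hfp'
      exact absurd (e1 ▸ (sb_pos hy).1) (lt_irrefl 0)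
    | rbase y' x' w₁' hfp' hy' =>
      obtain ⟨e1, e2⟩ := fp_unique' hfp hfp'
      rw [ih w₁' (e1 ▸ hy')]

-- D: a left Farey neighbor with smaller denominator has a shorter word
lemma nbr_len_lt {y z : ℚ} {w₁ w₂ : List LR} {p q r s : ℤ}
    (hy : SB y w₁) (hz : SB z w₂) (hq : 0 < q) (hs : 0 < s)
    (hd : q * r - p * s = 1) (hyq : y = (p:ℚ)/q) (hzq : z = (r:ℚ)/s)
    (hqs : q < s) : w₁.length < w₂.length := by
  cases hz with
  | half =>
    have heq : ((1:ℤ):ℚ)/((2:ℤ):ℚ) = (r:ℚ)/(s:ℚ) := by push_cast; exact hzq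
    obtain ⟨er, es⟩ := rep_unique (by norm_num) hs
      (show (1:ℤ) * 1 - 0 * 2 = 1 by norm_num) (show q * r - p * s = 1 from hd) heq
    rw [← er, ← es] at hd
    have hp0 : p = 0 := by omega
    have hy0 : y = 0 := by rw [hyq, hp0]; norm_num
    have := (sb_pos hy).1
    rw [hy0] at this
    exact absurd this (lt_irrefl 0)
  | left y' z' x' w₁' w₂' hfp' hy' hz' hlen' =>
    obtain ⟨p', q', r', s', hq', hs', hd', hyq', hzq', hx'⟩ := hfp'
    have heq : ((r:ℤ):ℚ)/((s:ℤ):ℚ) = ((p'+r' : ℤ):ℚ)/((q'+s' : ℤ):ℚ) := by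
      push_cast
      rw [← hzq]
      exact hx'
    obtain ⟨er, es⟩ := rep_unique hs (by omega) hd
      (show q' * (p'+r') - p' * (q'+s') = 1 by linear_combination hd') heq
    have hd2 : q' * r - p' * s = 1 := by rw [er, es]; linear_combination hd'
    obtain ⟨eq2, ep2⟩ := left_uniq hs hd hd2 hq hqs hq' (by omega)
    have hyy : y = y' := by rw [hyq, hyq', eq2, ep2]
    have hw : w₁ = w₁' := sb_word_unique hy w₁' (hyy ▸ hy')
    simp [hw, List.length_cons]
    omega
  | right y' z' x' w₁' w₂' hfp' hy' hz' hlen' =>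
    obtain ⟨p', q', r', s', hq', hs', hd', hyq', hzq', hx'⟩ := hfp'
    have heq : ((r:ℤ):ℚ)/((s:ℤ):ℚ) = ((p'+r' : ℤ):ℚ)/((q'+s' : ℤ):ℚ) := by
      push_cast
      rw [← hzq]
      exact hx'
    obtain ⟨er, es⟩ := rep_unique hs (by omega) hd
      (show q' * (p'+r') - p' * (q'+s') = 1 by linear_combination hd') heq
    have hd2 : q' * r - p' * s = 1 := by rw [er, es]; linear_combination hd'
    obtain ⟨eq2, ep2⟩ := left_uniq hs hd hd2 hq hqs hq' (by omega)
    have hyy : y = y' := by rw [hyq, hyq', eq2, ep2]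
    have hw : w₁ = w₁' := sb_word_unique hy w₁' (hyy ▸ hy')
    simp [hw, List.length_cons]
  | lbase z' x' w₂' hfp' hz' =>
    obtain ⟨p', q', r', s', hq', hs', hd', hyq', hzq', hx'⟩ := hfp'
    have hp' : p' = 0 := zero_rep hq' hyq'
    have hq'r' : q' * r' = 1 := by linear_combination hd' + s' * hp'
    obtain ⟨eq1, er1⟩ := mul_eq_one_pos hq' hq'r'
    have heq : ((r:ℤ):ℚ)/((s:ℤ):ℚ) = ((p'+r' : ℤ):ℚ)/((q'+s' : ℤ):ℚ) := by
      push_cast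
      rw [← hzq]
      exact hx'
    obtain ⟨er, es⟩ := rep_unique hs (by omega) hd
      (show q' * (p'+r') - p' * (q'+s') = 1 by linear_combination hd') heq
    have hr1 : r = 1 := by omega
    have hdq : q - p * s = 1 := by rw [hr1] at hd; linarith
    have hp0 : p = 0 := small_left_of_unit_num hq hs hqs hdq
    have hy0 : y = 0 := by rw [hyq, hp0]; norm_num
    have h00 := (sb_pos hy).1
    rw [hy0] at h00
    exact absurd h00 (lt_irrefl 0)
  | rbase y' x' w₁' hfp' hy' =>
    obtain ⟨p', q', r', s', hq', hs', hd', hyq', hzq', hx'⟩ := hfp'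
    have hrs' : r' = s' := one_rep hs' hzq'
    obtain ⟨er1, eq1⟩ := mul_eq_one_pos hs' (show s' * (q' - p') = 1 by
      rw [hrs'] at hd'; linear_combination hd')
    have heq : ((r:ℤ):ℚ)/((s:ℤ):ℚ) = ((p'+r' : ℤ):ℚ)/((q'+s' : ℤ):ℚ) := by
      push_cast
      rw [← hzq]
      exact hx'
    obtain ⟨er, es⟩ := rep_unique hs (by omega) hd
      (show (-1) * (p'+r') - (-1) * (q'+s') = 1 by omega) heq
    have hd2 : q' * r - p' * s = 1 := by rw [er, es]; linear_combination hd'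
    obtain ⟨eq2, ep2⟩ := left_uniq hs hd hd2 hq hqs hq' (by omega)
    have hyy : y = y' := by rw [hyq, hyq', eq2, ep2]
    have hw : w₁ = w₁' := sb_word_unique hy w₁' (hyy ▸ hy')
    simp [hw, List.length_cons]

-- D': a right Farey neighbor with smaller denominator has a shorter word
lemma nbr_len_lt' {y z : ℚ} {w₁ w₂ : List LR} {p q r s : ℤ}
    (hy : SB y w₁) (hz : SB z w₂) (hq : 0 < q) (hs : 0 < s)
    (hd : q * r - p * s = 1) (hyq : y = (p:ℚ)/q) (hzq : z = (r:ℚ)/s)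
    (hsq : s < q) : w₂.length < w₁.length := by
  cases hy with
  | half =>
    have heq : ((1:ℤ):ℚ)/((2:ℤ):ℚ) = (p:ℚ)/(q:ℚ) := by push_cast; exact hyq
    obtain ⟨ep, eq'⟩ := rep_unique (by norm_num) hq
      (show (1:ℤ) * 1 - 0 * 2 = 1 by norm_num)
      (show (-s) * p - (-r) * q = 1 by linear_combination hd) heq
    rw [← ep, ← eq'] at hd
    have hr1 : r = 1 := by omega
    have hs1 : s = 1 := by omega
    have hz1 : z = 1 := by rw [hzq, hr1, hs1]; norm_num
    have h11 := (sb_pos hz).2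
    rw [hz1] at h11
    exact absurd h11 (lt_irrefl 1)
  | left y' z' x' w₁' w₂' hfp' hy' hz' hlen' =>
    obtain ⟨p', q', r', s', hq', hs', hd', hyq', hzq', hx'⟩ := hfp'
    have heq : ((p:ℤ):ℚ)/((q:ℤ):ℚ) = ((p'+r' : ℤ):ℚ)/((q'+s' : ℤ):ℚ) := by
      push_cast
      rw [← hyq]
      exact hx'
    obtain ⟨ep, eq'⟩ := rep_unique hq (by omega)
      (show (-s) * p - (-r) * q = 1 by linear_combination hd)
      (show q' * (p'+r') - p' * (q'+s') = 1 by linear_combination hd') heq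
    have hd2 : q * r' - p * s' = 1 := by rw [ep, eq']; linear_combination hd'
    obtain ⟨es2, er2⟩ := right_uniq hq hd hd2 hs hsq hs' (by omega)
    have hzz : z = z' := by rw [hzq, hzq', es2, er2]
    have hw : w₂ = w₂' := sb_word_unique hz w₂' (hzz ▸ hz')
    simp [hw, List.length_cons]
  | right y' z' x' w₁' w₂' hfp' hy' hz' hlen' =>
    obtain ⟨p', q', r', s', hq', hs', hd', hyq', hzq', hx'⟩ := hfp'
    have heq : ((p:ℤ):ℚ)/((q:ℤ):ℚ) = ((p'+r' : ℤ):ℚ)/((q'+s' : ℤ):ℚ) := by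
      push_cast
      rw [← hyq]
      exact hx'
    obtain ⟨ep, eq'⟩ := rep_unique hq (by omega)
      (show (-s) * p - (-r) * q = 1 by linear_combination hd)
      (show q' * (p'+r') - p' * (q'+s') = 1 by linear_combination hd') heq
    have hd2 : q * r' - p * s' = 1 := by rw [ep, eq']; linear_combination hd'
    obtain ⟨es2, er2⟩ := right_uniq hq hd hd2 hs hsq hs' (by omega)
    have hzz : z = z' := by rw [hzq, hzq', es2, er2]
    have hw : w₂ = w₂' := sb_word_unique hz w₂' (hzz ▸ hz')
    simp [hw, List.length_cons]
    omega
  | lbase z' x' w₂' hfp' hz' =>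
    obtain ⟨p', q', r', s', hq', hs', hd', hyq', hzq', hx'⟩ := hfp'
    have hp' : p' = 0 := zero_rep hq' hyq'
    have hq'r' : q' * r' = 1 := by linear_combination hd' + s' * hp'
    obtain ⟨eq1, er1⟩ := mul_eq_one_pos hq' hq'r'
    have heq : ((p:ℤ):ℚ)/((q:ℤ):ℚ) = ((p'+r' : ℤ):ℚ)/((q'+s' : ℤ):ℚ) := by
      push_cast
      rw [← hyq]
      exact hx'
    obtain ⟨ep, eq'⟩ := rep_unique hq (by omega)
      (show (-s) * p - (-r) * q = 1 by linear_combination hd)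
      (show q' * (p'+r') - p' * (q'+s') = 1 by linear_combination hd') heq
    have hd2 : q * r' - p * s' = 1 := by
      rw [ep, eq', hp', er1, eq1]
      omega
    obtain ⟨es2, er2⟩ := right_uniq hq hd hd2 hs hsq hs' (by omega)
    have hzz : z = z' := by rw [hzq, hzq', es2, er2]
    have hw : w₂ = w₂' := sb_word_unique hz w₂' (hzz ▸ hz')
    simp [hw, List.length_cons]
  | rbase y' x' w₁' hfp' hy' =>
    obtain ⟨p', q', r', s', hq', hs', hd', hyq', hzq', hx'⟩ := hfp'
    have hrs' : r' = s' := one_rep hs' hzq'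
    obtain ⟨er1, eq1⟩ := mul_eq_one_pos hs' (show s' * (q' - p') = 1 by
      rw [hrs'] at hd'; linear_combination hd')
    have heq : ((p:ℤ):ℚ)/((q:ℤ):ℚ) = ((p'+r' : ℤ):ℚ)/((q'+s' : ℤ):ℚ) := by
      push_cast
      rw [← hyq]
      exact hx'
    obtain ⟨ep, eq'⟩ := rep_unique hq (by omega)
      (show (-s) * p - (-r) * q = 1 by linear_combination hd)
      (show (-1) * (p'+r') - (-1) * (q'+s') = 1 by omega) heq
    have hd2 : q * 1 - p * 1 = 1 := by omega
    obtain ⟨es2, er2⟩ := right_uniq hq hd hd2 hs hsq (by norm_num) (by omega)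
    have hz1 : z = 1 := by rw [hzq, er2, es2]; norm_num
    have h11 := (sb_pos hz).2
    rw [hz1] at h11
    exact absurd h11 (lt_irrefl 1)

-- Farey neighbors with an SB rational cannot have equal denominators (z version)
lemma den_ne_z {z : ℚ} (h0 : 0 < z) (h1 : z < 1) {p q r s : ℤ} (hq : 0 < q)
    (hd : q * r - p * s = 1) (hzq : z = (r:ℚ)/s) (hqs : q = s) : False := by
  obtain ⟨hq1, -⟩ := mul_eq_one_pos hq (show q * (r - p) = 1 by
    linear_combination hd - p * hqs)
  have hs1 : s = 1 := by omega
  rw [hzq, hs1] at h0 h1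
  have h0' : 0 < r := by exact_mod_cast (by simpa using h0 : (0:ℚ) < (r:ℚ))
  have h1' : r < 1 := by exact_mod_cast (by simpa using h1 : ((r:ℚ)) < 1)
  omega

-- (y version)
lemma den_ne_y {y : ℚ} (h0 : 0 < y) (h1 : y < 1) {p q r s : ℤ} (hq : 0 < q)
    (hd : q * r - p * s = 1) (hyq : y = (p:ℚ)/q) (hqs : q = s) : False := by
  obtain ⟨hq1, -⟩ := mul_eq_one_pos hq (show q * (r - p) = 1 by
    linear_combination hd - p * hqs)
  rw [hyq, hq1] at h0 h1
  have h0' : 0 < p := by exact_mod_cast (by simpa using h0 : (0:ℚ) < (p:ℚ))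
  have h1' : p < 1 := by exact_mod_cast (by simpa using h1 : ((p:ℚ)) < 1)
  omega

-- shorter word forces smaller denominator (for neighbors)
lemma den_lt_of_len_lt {y z : ℚ} {w₁ w₂ : List LR} {p q r s : ℤ}
    (hy : SB y w₁) (hz : SB z w₂) (hq : 0 < q) (hs : 0 < s)
    (hd : q * r - p * s = 1) (hyq : y = (p:ℚ)/q) (hzq : z = (r:ℚ)/s)
    (hlen : w₁.length < w₂.length) : q < s := by
  rcases lt_trichotomy q s with h | h | h
  · exact h
  · exact absurd (den_ne_z (sb_pos hz).1 (sb_pos hz).2 hq hd hzq h) not_false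
  · have := nbr_len_lt' hy hz hq hs hd hyq hzq h
    omega

lemma den_gt_of_len_gt {y z : ℚ} {w₁ w₂ : List LR} {p q r s : ℤ}
    (hy : SB y w₁) (hz : SB z w₂) (hq : 0 < q) (hs : 0 < s)
    (hd : q * r - p * s = 1) (hyq : y = (p:ℚ)/q) (hzq : z = (r:ℚ)/s)
    (hlen : w₂.length < w₁.length) : s < q := by
  rcases lt_trichotomy q s with h | h | h
  · have := nbr_len_lt hy hz hq hs hd hyq hzq h
    omega
  · exact absurd (den_ne_y (sb_pos hy).1 (sb_pos hy).2 hq hd hyq h) not_false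
  · exact h

-- injectivity: the rational of a word is unique
lemma sb_inj {α : ℚ} {w : List LR} (h : SB α w) : ∀ β, SB β w → α = β := by
  induction h with
  | half =>
    intro β hβ
    cases hβ
    rfl
  | left y z x w₁ w₂ hfp hy hz hlen ih1 ih2 =>
    intro β hβ
    cases hβ with
    | left y' z' x' w₁' w₂' hfp' hy' hz' hlen' =>
      have ez : z = z' := ih2 _ hz'
      subst ez
      obtain ⟨p, q, r, s, hq, hs, hd, hyq, hzq, hx⟩ := hfp
      obtain ⟨p', q', r', s', hq', hs', hd', hyq', hzq', hx'⟩ := hfp'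
      have heq : ((r:ℤ):ℚ)/((s:ℤ):ℚ) = ((r':ℤ):ℚ)/((s':ℤ):ℚ) := by
        push_cast; rw [← hzq]; exact hzq'
      obtain ⟨er, es⟩ := rep_unique hs hs' hd hd' heq
      have hd'2 : q' * r - p' * s = 1 := by rw [er, es]; exact hd'
      have hlt : q < s := den_lt_of_len_lt hy hz hq hs hd hyq hzq hlen
      have hlt' : q' < s := den_lt_of_len_lt hy' hz hq' hs hd'2 hyq' hzq hlen'
      obtain ⟨eq2, ep2⟩ := left_uniq hs hd hd'2 hq hlt hq' hlt'
      rw [hx, hx', ← er, ← es, ← eq2, ← ep2]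
    | lbase z' x' w₂' hfp' hz' =>
      have ez : z = z' := ih2 _ hz'
      subst ez
      obtain ⟨p, q, r, s, hq, hs, hd, hyq, hzq, hx⟩ := hfp
      obtain ⟨p', q', r', s', hq', hs', hd', hyq', hzq', hx'⟩ := hfp'
      have hp0' : p' = 0 := zero_rep hq' hyq'
      obtain ⟨hq1', hr1'⟩ := mul_eq_one_pos hq' (show q' * r' = 1 by
        linear_combination hd' + s' * hp0')
      have heq : ((r:ℤ):ℚ)/((s:ℤ):ℚ) = ((r':ℤ):ℚ)/((s':ℤ):ℚ) := by
        push_cast; rw [← hzq]; exact hzq'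
      obtain ⟨er, es⟩ := rep_unique hs hs' hd hd' heq
      have hr1 : r = 1 := by omega
      have hlt : q < s := den_lt_of_len_lt hy hz hq hs hd hyq hzq hlen
      have hdq : q - p * s = 1 := by rw [hr1] at hd; linarith
      have hp0 : p = 0 := small_left_of_unit_num hq hs hlt hdq
      have hy0 : y = 0 := by rw [hyq, hp0]; norm_num
      have h00 := (sb_pos hy).1
      rw [hy0] at h00
      exact absurd h00 (lt_irrefl 0)
  | right y z x w₁ w₂ hfp hy hz hlen ih1 ih2 =>
    intro β hβ
    cases hβ with
    | right y' z' x' w₁' w₂' hfp' hy' hz' hlen' =>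
      have ey : y = y' := ih1 _ hy'
      subst ey
      obtain ⟨p, q, r, s, hq, hs, hd, hyq, hzq, hx⟩ := hfp
      obtain ⟨p', q', r', s', hq', hs', hd', hyq', hzq', hx'⟩ := hfp'
      have heq : ((p:ℤ):ℚ)/((q:ℤ):ℚ) = ((p':ℤ):ℚ)/((q':ℤ):ℚ) := by
        push_cast; rw [← hyq]; exact hyq'
      obtain ⟨ep, eq2⟩ := rep_unique hq hq'
        (show (-s) * p - (-r) * q = 1 by linear_combination hd)
        (show (-s') * p' - (-r') * q' = 1 by linear_combination hd') heq
      have hd'2 : q * r' - p * s' = 1 := by rw [ep, eq2]; exact hd'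
      have hlt : s < q := den_gt_of_len_gt hy hz hq hs hd hyq hzq hlen
      have hlt' : s' < q := den_gt_of_len_gt hy hz' hq hs' hd'2 hyq hzq' hlen'
      obtain ⟨es2, er2⟩ := right_uniq hq hd hd'2 hs hlt hs' hlt'
      rw [hx, hx', ← ep, ← eq2, ← es2, ← er2]
    | rbase y' x' w₁' hfp' hy' =>
      have ey : y = y' := ih1 _ hy'
      subst ey
      obtain ⟨p, q, r, s, hq, hs, hd, hyq, hzq, hx⟩ := hfp
      obtain ⟨p', q', r', s', hq', hs', hd', hyq', hzq', hx'⟩ := hfp'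
      have hrs' : r' = s' := one_rep hs' hzq'
      obtain ⟨hs1', hqp'⟩ := mul_eq_one_pos hs' (show s' * (q' - p') = 1 by
        rw [hrs'] at hd'; linear_combination hd')
      have heq : ((p:ℤ):ℚ)/((q:ℤ):ℚ) = ((p':ℤ):ℚ)/((q':ℤ):ℚ) := by
        push_cast; rw [← hyq]; exact hyq'
      obtain ⟨ep, eq2⟩ := rep_unique hq hq'
        (show (-s) * p - (-r) * q = 1 by linear_combination hd)
        (show (-1) * p' - (-1) * q' = 1 by omega) heq
      obtain ⟨hp1, -⟩ := num_bounds hq hyq (sb_pos hy).1 (sb_pos hy).2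
      have hlt : s < q := den_gt_of_len_gt hy hz hq hs hd hyq hzq hlen
      have hd2 : q * 1 - p * 1 = 1 := by omega
      obtain ⟨es2, er2⟩ := right_uniq hq hd hd2 hs hlt (by norm_num) (by omega)
      have hz1 : z = 1 := by rw [hzq, er2, es2]; norm_num
      have h11 := (sb_pos hz).2
      rw [hz1] at h11
      exact absurd h11 (lt_irrefl 1)
  | lbase z x w₂ hfp hz ih =>
    intro β hβ
    cases hβ with
    | left y' z' x' w₁' w₂' hfp' hy' hz' hlen' =>
      have ez : z = z' := ih _ hz'
      subst ez
      obtain ⟨p, q, r, s, hq, hs, hd, hyq, hzq, hx⟩ := hfp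
      obtain ⟨p', q', r', s', hq', hs', hd', hyq', hzq', hx'⟩ := hfp'
      have hp0 : p = 0 := zero_rep hq hyq
      obtain ⟨hq1, hr1⟩ := mul_eq_one_pos hq (show q * r = 1 by
        linear_combination hd + s * hp0)
      have heq : ((r':ℤ):ℚ)/((s':ℤ):ℚ) = ((r:ℤ):ℚ)/((s:ℤ):ℚ) := by
        push_cast; rw [← hzq']; exact hzq
      obtain ⟨er, es⟩ := rep_unique hs' hs hd' hd heq
      have hd'2 : q' * r - p' * s = 1 := by rw [← er, ← es]; exact hd'
      have hlt' : q' < s := den_lt_of_len_lt hy' hz hq' hs hd'2 hyq' hzq hlen'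
      have hdq' : q' - p' * s = 1 := by rw [hr1] at hd'2; linarith
      have hp0' : p' = 0 := small_left_of_unit_num hq' hs hlt' hdq'
      have hy0' : y' = 0 := by rw [hyq', hp0']; norm_num
      have h00 := (sb_pos hy').1
      rw [hy0'] at h00
      exact absurd h00 (lt_irrefl 0)
    | lbase z' x' w₂' hfp' hz' =>
      have ez : z = z' := ih _ hz'
      subst ez
      obtain ⟨p, q, r, s, hq, hs, hd, hyq, hzq, hx⟩ := hfp
      obtain ⟨p', q', r', s', hq', hs', hd', hyq', hzq', hx'⟩ := hfp'
      have hp0 : p = 0 := zero_rep hq hyq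
      have hp0' : p' = 0 := zero_rep hq' hyq'
      obtain ⟨hq1, hr1⟩ := mul_eq_one_pos hq (show q * r = 1 by
        linear_combination hd + s * hp0)
      obtain ⟨hq1', hr1'⟩ := mul_eq_one_pos hq' (show q' * r' = 1 by
        linear_combination hd' + s' * hp0')
      have heq : ((r:ℤ):ℚ)/((s:ℤ):ℚ) = ((r':ℤ):ℚ)/((s':ℤ):ℚ) := by
        push_cast; rw [← hzq]; exact hzq'
      obtain ⟨er, es⟩ := rep_unique hs hs' hd hd' heq
      rw [hx, hx', hp0, hp0', hq1, hq1', hr1, hr1', ← es]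
  | rbase y x w₁ hfp hy ih =>
    intro β hβ
    cases hβ with
    | right y' z' x' w₁' w₂' hfp' hy' hz' hlen' =>
      have ey : y = y' := ih _ hy'
      subst ey
      obtain ⟨p, q, r, s, hq, hs, hd, hyq, hzq, hx⟩ := hfp
      obtain ⟨p', q', r', s', hq', hs', hd', hyq', hzq', hx'⟩ := hfp'
      have hrs : r = s := one_rep hs hzq
      obtain ⟨hs1, hqp⟩ := mul_eq_one_pos hs (show s * (q - p) = 1 by
        rw [hrs] at hd; linear_combination hd)
      have heq : ((p':ℤ):ℚ)/((q':ℤ):ℚ) = ((p:ℤ):ℚ)/((q:ℤ):ℚ) := by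
        push_cast; rw [← hyq']; exact hyq
      obtain ⟨ep, eq2⟩ := rep_unique hq' hq
        (show (-s') * p' - (-r') * q' = 1 by linear_combination hd')
        (show (-1) * p - (-1) * q = 1 by omega) heq
      obtain ⟨hp1, -⟩ := num_bounds hq hyq (sb_pos hy).1 (sb_pos hy).2
      have hlt' : s' < q' := by
        rcases lt_trichotomy q' s' with hcmp | hcmp | hcmp
        · have := nbr_len_lt hy' hz' hq' hs' hd' hyq' hzq' hcmp
          omega
        · exact absurd (den_ne_y (sb_pos hy').1 (sb_pos hy').2 hq' hd' hyq' hcmp) not_false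
        · exact hcmp
      have hd2 : q' * 1 - p' * 1 = 1 := by omega
      obtain ⟨es2, er2⟩ := right_uniq hq' hd' hd2 hs' hlt' (by norm_num) (by omega)
      have hz1 : z' = 1 := by rw [hzq', er2, es2]; norm_num
      have h11 := (sb_pos hz').2
      rw [hz1] at h11
      exact absurd h11 (lt_irrefl 1)
    | rbase y' x' w₁' hfp' hy' =>
      have ey : y = y' := ih _ hy'
      subst ey
      obtain ⟨p, q, r, s, hq, hs, hd, hyq, hzq, hx⟩ := hfp
      obtain ⟨p', q', r', s', hq', hs', hd', hyq', hzq', hx'⟩ := hfp'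
      have hrs : r = s := one_rep hs hzq
      have hrs' : r' = s' := one_rep hs' hzq'
      obtain ⟨hs1, hqp⟩ := mul_eq_one_pos hs (show s * (q - p) = 1 by
        rw [hrs] at hd; linear_combination hd)
      obtain ⟨hs1', hqp'⟩ := mul_eq_one_pos hs' (show s' * (q' - p') = 1 by
        rw [hrs'] at hd'; linear_combination hd')
      have heq : ((p:ℤ):ℚ)/((q:ℤ):ℚ) = ((p':ℤ):ℚ)/((q':ℤ):ℚ) := by
        push_cast; rw [← hyq]; exact hyq'
      obtain ⟨ep, eq2⟩ := rep_unique hq hq'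
        (show (-1) * p - (-1) * q = 1 by omega)
        (show (-1) * p' - (-1) * q' = 1 by omega) heq
      have hr1 : r = 1 := by omega
      have hr1' : r' = 1 := by omega
      rw [hx, hx', hr1, hr1', hs1, hs1', ← ep, ← eq2]

-- reflection of a Farey pair
lemma fp_flip {y z x : ℚ} (h : FareyPair y z x) : FareyPair (1-z) (1-y) (1-x) := by
  obtain ⟨p, q, r, s, hq, hs, hd, hyq, hzq, hx⟩ := h
  refine ⟨s - r, s, q - p, q, hs, hq, by linear_combination hd, ?_, ?_, ?_⟩
  · have hsq : ((s:ℚ)) ≠ 0 := by positivity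
    rw [hzq]
    push_cast
    field_simp
  · have hqq : ((q:ℚ)) ≠ 0 := by positivity
    rw [hyq]
    push_cast
    field_simp
  · have hq' : (0:ℚ) < (q:ℚ) := by exact_mod_cast hq
    have hs' : (0:ℚ) < (s:ℚ) := by exact_mod_cast hs
    have hden : ((q:ℚ)) + s ≠ 0 := by positivity
    rw [hx]
    push_cast
    field_simp
    ring

-- symmetry: the word of 1 - α is the letter-swap of the word of α
lemma sb_sym {α : ℚ} {w : List LR} (h : SB α w) : SB (1 - α) (iop w) := by
  induction h with
  | half =>
    have : (1:ℚ) - 1/2 = 1/2 := by norm_num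
    rw [this]
    exact SB.half
  | left y z x w₁ w₂ hfp hy hz hlen ih1 ih2 =>
    exact SB.right (1-z) (1-y) (1-x) (iop w₂) (iop w₁) (fp_flip hfp) ih2 ih1
      (by simpa [iop] using hlen)
  | right y z x w₁ w₂ hfp hy hz hlen ih1 ih2 =>
    exact SB.left (1-z) (1-y) (1-x) (iop w₂) (iop w₁) (fp_flip hfp) ih2 ih1
      (by simpa [iop] using hlen)
  | lbase z x w₂ hfp hz ih =>
    have h' : FareyPair (1-z) 1 (1-x) := by simpa using fp_flip hfp
    exact SB.rbase (1-z) (1-x) (iop w₂) h' ih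
  | rbase y x w₁ hfp hy ih =>
    have h' : FareyPair 0 (1-y) (1-x) := by simpa using fp_flip hfp
    exact SB.lbase (1-y) (1-x) (iop w₁) h' ih

-- the bracket of the reflection is the involution of the bracket
lemma g_sym (g : ℚ → LaurentPolynomial ℤ)
    (h0 : g 0 = 1) (h1 : g 1 = 1)
    (hhalf : g (1/2) = -T 4 - T (-4))
    (hrec : ∀ x y z : ℚ, FareyPair y z x → g x = -T 4 * g y - T (-4) * g z)
    {α : ℚ} {w : List LR} (h : SB α w) : g (1 - α) = invert (g α) := by
  induction h with
  | half =>
    have e : (1:ℚ) - 1/2 = 1/2 := by norm_num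
    rw [e, hhalf]
    simp only [map_sub, map_neg, invert_T]
    ring
  | left y z x w₁ w₂ hfp hy hz hlen ih1 ih2 =>
    rw [hrec x y z hfp, hrec (1-x) (1-z) (1-y) (fp_flip hfp), ih1, ih2]
    simp only [map_sub, map_neg, map_mul, invert_T]
    ring
  | right y z x w₁ w₂ hfp hy hz hlen ih1 ih2 =>
    rw [hrec x y z hfp, hrec (1-x) (1-z) (1-y) (fp_flip hfp), ih1, ih2]
    simp only [map_sub, map_neg, map_mul, invert_T]
    ring
  | lbase z x w₂ hfp hz ih =>
    have h' : FareyPair (1-z) 1 (1-x) := by simpa using fp_flip hfp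
    rw [hrec x 0 z hfp, hrec (1-x) (1-z) 1 h', ih, h0, h1]
    simp only [map_sub, map_neg, map_mul, map_one, invert_T]
    ring
  | rbase y x w₁ hfp hy ih =>
    have h' : FareyPair 0 (1-y) (1-x) := by simpa using fp_flip hfp
    rw [hrec x y 1 hfp, hrec (1-x) 0 (1-y) h', ih, h0, h1]
    simp only [map_sub, map_neg, map_mul, map_one, invert_T]
    ring

/-- The Kauffman bracket of Conway-Coxeter friezes, as a function g = v∘φ on the
rationals in [0,1] (so that ⟨Γ(w)⟩ = g(α) when w is the LR word of α), satisfies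
g(0) = g(1) = 1, the base cases ⟨Γ(ε)⟩ = g(1/2) = -A⁴ - A⁻⁴,
⟨Γ(L)⟩ = g(1/3) = -A⁴ + 1 + A⁻⁸, ⟨Γ(R)⟩ = g(2/3) = A⁸ + 1 - A⁻⁴, and the Farey-sum
recursion g(x) = -A⁴ g(y) - A⁻⁴ g(z) for parents (y,z) of x.  For any such g,
applying the ring involution A ↦ A⁻¹ (`invert`) to ⟨Γ(w)⟩ gives ⟨Γ(i(w))⟩, where
i swaps L and R. -/
theorem Gamma_iop_invert (g : ℚ → LaurentPolynomial ℤ)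
    (h0 : g 0 = 1) (h1 : g 1 = 1)
    (hhalf : g (1/2) = -T 4 - T (-4))
    (hthird : g (1/3) = -T 4 + 1 + T (-8))
    (h23 : g (2/3) = T 8 + 1 - T (-4))
    (hrec : ∀ x y z : ℚ, FareyPair y z x → g x = -T 4 * g y - T (-4) * g z)
    (w : List LR) (α β : ℚ) (hα : SB α w) (hβ : SB β (iop w)) :
    g β = invert (g α) := by
  have hsym : SB (1 - α) (iop w) := sb_sym hα
  have e : β = 1 - α := sb_inj hβ (1 - α) hsym
  rw [e]
  exact g_sym g h0 h1 hhalf hrec hα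
end

section
/- Define v(φ(α)) ∈ ℤ[A, A⁻¹] for α ∈ ℚ ∩ (0,1] ∪ {0} by v(φ(0)) = 1, v(φ(1)) computed from the parents recursion, base values at 1/2, and the recursion v(φ(x)) = -A⁴ v(φ(y)) - A⁻⁴ v(φ(z)) for parents (y,z). Then for every irreducible fraction p/q with 1 ≤ p ≤ q, substituting A = ω for ω a primitive 8th root of unity yields v(φ(p/q))(ω) = q. -/
open LaurentPolynomial

/-- Let v∘φ satisfy v(φ(0)) = 1, v(φ(∞)) = A⁶·(-A² - A⁻²) and
v(φ(x)) = -A⁴·v(φ(y)) - A⁻⁴·v(φ(z)) for x the mediant of its parents (y,z).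
Then for every irreducible fraction p/q with 1 ≤ p ≤ q, substituting a primitive
8th root of unity ω for A yields v(φ(p/q))(ω) = q. -/
theorem v_phi_at_eighth_root (vφ : WithTop ℚ≥0 → LaurentPolynomial ℤ)
    (h0 : vφ 0 = 1) (hinf : vφ ⊤ = T 6 * (-T 2 - T (-2)))
    (hrec : ∀ x y z, IsParents y z x → vφ x = -T 4 * vφ y - T (-4) * vφ z)
    (p q : ℕ) (hp : 1 ≤ p) (hpq : p ≤ q) (hcop : Nat.Coprime p q)
    (ω : ℂ) (hω : IsPrimitiveRoot ω 8)
    (ev : LaurentPolynomial ℤ →+* ℂ) (hev : ev (T 1) = ω) :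
    ev (vφ (toW p q)) = (q : ℂ) := by
  have h8 : ω ^ 8 = 1 := hω.pow_eq_one
  have h4 : ω ^ 4 = -1 := by
    have h4ne : ω ^ 4 ≠ 1 := hω.pow_ne_one_of_pos_of_lt (by norm_num) (by norm_num)
    have h : (ω ^ 4 - 1) * (ω ^ 4 + 1) = 0 := by linear_combination h8
    rcases mul_eq_zero.mp h with h' | h'
    · exact absurd (by linear_combination h') h4ne
    · linear_combination h'
  have hT2 : ev (T 2) = ω ^ 2 := by
    rw [show (2 : ℤ) = 1 + 1 by norm_num, T_add, map_mul, hev]; ring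
  have hT4 : ev (T 4) = -1 := by
    rw [show (4 : ℤ) = 2 + 2 by norm_num, T_add, map_mul, hT2, ← h4]; ring
  have hT6 : ev (T 6) = ω ^ 4 * ω ^ 2 := by
    rw [show (6 : ℤ) = 4 + 2 by norm_num, T_add, map_mul, hT2,
      show (4 : ℤ) = 2 + 2 by norm_num, T_add, map_mul, hT2]; ring
  have hTm4 : ev (T (-4)) = -1 := by
    have h : ev (T (-4)) * ev (T 4) = 1 := by
      rw [← map_mul, ← T_add, show (-4 : ℤ) + 4 = 0 by norm_num, T_zero, map_one]
    rw [hT4] at h; linear_combination -h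
  have hTm2 : ev (T (-2)) * ω ^ 2 = 1 := by
    rw [← hT2, ← map_mul, ← T_add, show (-2 : ℤ) + 2 = 0 by norm_num, T_zero, map_one]
  have hinf' : ev (vφ ⊤) = 0 := by
    rw [hinf, map_mul, map_sub, map_neg, hT6, hT2]
    linear_combination -h8 - ω ^ 4 * hTm2 - h4
  have erec : ∀ x y z, IsParents y z x → ev (vφ x) = ev (vφ y) + ev (vφ z) := by
    intro x y z h
    rw [hrec x y z h, map_sub, map_mul, map_mul, map_neg, hT4, hTm4]; ring
  have key : ∀ N, ∀ p q : ℕ, p + q ≤ N → Nat.Coprime p q → ev (vφ (toW p q)) = q := by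
    intro N
    induction N with
    | zero =>
      intro p q hle hc
      have hp0 : p = 0 := by omega
      have hq0 : q = 0 := by omega
      subst hp0; subst hq0
      simp [Nat.Coprime] at hc
    | succ N ih =>
      intro p q hle hc
      rcases Nat.eq_zero_or_pos q with hq0 | hq1
      · subst hq0
        have hp1 : p = 1 := by simpa using hc
        subst hp1
        rw [show toW 1 0 = ⊤ by simp [toW], hinf']
        norm_num
      rcases Nat.eq_zero_or_pos p with hp0 | hp1
      · subst hp0
        have hq1' : q = 1 := by simpa using hc
        subst hq1'
        rw [show toW 0 1 = 0 by simp [toW], h0, map_one]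
        norm_num
      rcases eq_or_lt_of_le (show 1 ≤ q from hq1) with hq1' | hq2
      · -- q = 1
        have hpar : IsParents (toW (p - 1) 1) (toW 1 0) (toW p q) :=
          ⟨p - 1, 1, 1, 0, by simp, rfl, rfl, by congr 1 <;> omega⟩
        rw [erec _ _ _ hpar, ih (p - 1) 1 (by omega) (Nat.coprime_one_right _),
          ih 1 0 (by omega) (Nat.coprime_one_left _)]
        rw [← hq1']
        norm_num
      · -- q ≥ 2
        haveI : NeZero q := ⟨by omega⟩
        set u := (ZMod.unitOfCoprime p hc)⁻¹ with hu
        set b := (u : ZMod q).val with hb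
        have hbu : ((b : ℕ) : ZMod q) = (u : ZMod q) := by
          rw [hb, ZMod.natCast_val, ZMod.cast_id]
        have hmod : ((b * p : ℕ) : ZMod q) = ((1 : ℕ) : ZMod q) := by
          push_cast
          rw [hbu, ← ZMod.coe_unitOfCoprime p hc, ← Units.val_mul, hu, inv_mul_cancel]
          simp
        have hmodeq : b * p ≡ 1 [MOD q] := (ZMod.natCast_eq_natCast_iff _ _ _).mp hmod
        have hbp1 : 1 ≤ b * p := by
          by_contra h
          have hbp0 : b * p = 0 := by omega
          have := hmodeq
          rw [hbp0] at this
          have h1 : 0 % q = 1 % q := this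
          rw [Nat.zero_mod, Nat.mod_eq_of_lt (by omega)] at h1
          omega
        have hdvd : q ∣ b * p - 1 := (Nat.modEq_iff_dvd' hbp1).mp hmodeq.symm
        obtain ⟨a, haq⟩ : ∃ a, q * a = b * p - 1 := ⟨_, Nat.mul_div_cancel' hdvd⟩
        have hkey : b * p = q * a + 1 := by omega
        have hblt : b < q := ZMod.val_lt _
        have halt : a < p := by
          have h1 : q * a < q * p := by
            calc q * a < b * p := by omega
              _ ≤ (q - 1) * p := Nat.mul_le_mul_right p (by omega)
              _ < q * p := (Nat.mul_lt_mul_right hp1).mpr (by omega)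
          exact lt_of_mul_lt_mul_left h1 (Nat.zero_le q)
        have hb1 : 1 ≤ b := by
          rcases Nat.eq_zero_or_pos b with h | h
          · rw [h] at hkey; omega
          · exact h
        have hkey' : (b : ℤ) * p = q * a + 1 := by exact_mod_cast hkey
        have hfar : b * (p - a) = a * (q - b) + 1 := by
          zify [halt.le, hblt.le]
          linear_combination hkey'
        have hcab : Nat.Coprime a b := by
          have hd : Nat.gcd a b ∣ 1 := by
            have h1 : Nat.gcd a b ∣ b * p := (Nat.gcd_dvd_right a b).mul_right p
            rw [hkey] at h1
            exact (Nat.dvd_add_right ((Nat.gcd_dvd_left a b).mul_left q)).mp h1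
          exact Nat.dvd_one.mp hd
        have hcrs : Nat.Coprime (p - a) (q - b) := by
          have hd : Nat.gcd (p - a) (q - b) ∣ 1 := by
            have h1 : Nat.gcd (p - a) (q - b) ∣ b * (p - a) :=
              (Nat.gcd_dvd_left _ _).mul_left b
            rw [hfar] at h1
            exact (Nat.dvd_add_right ((Nat.gcd_dvd_right _ _).mul_left a)).mp h1
          exact Nat.dvd_one.mp hd
        have hpar : IsParents (toW a b) (toW (p - a) (q - b)) (toW p q) :=
          ⟨a, b, p - a, q - b, hfar, rfl, rfl, by congr 1 <;> omega⟩
        rw [erec _ _ _ hpar, ih a b (by omega) hcab, ih (p - a) (q - b) (by omega) hcrs]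
        push_cast [hblt.le]
        ring
  exact key (p + q) p q le_rfl hcop
end
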